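/- arXiv:1308.4073 — 6 statements merged into one kernel-verified Lean document; each statement's English description precedes it below -/
import Mathlib

section
/- Let X, Ξ ∈ ℝ^{n×n} be real matrices with XᵀΞ = ΞᵀX and ker X ∩ ker Ξ = {0} (equivalently, the stacked 2n×n matrix with blocks X and Ξ has rank n). Let C ∈ ℂ^{n×n} be a complex symmetric matrix whose imaginary part Im C = (C − C̄)/(2i) is positive definite. Then the matrix Ξ − C X is invertible. -/
open Matrix

private lemma sym_swap {n : ℕ} (M : Matrix (Fin n) (Fin n) ℝ) (hM : Mᵀ = M)
    (x y : Fin n → ℝ) :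
    ∑ i, ∑ j, M i j * (x i * y j) = ∑ i, ∑ j, M i j * (y i * x j) := by
  rw [Finset.sum_comm]
  refine Finset.sum_congr rfl fun i _ => Finset.sum_congr rfl fun j _ => ?_
  have h2 : M j i = M i j := congrFun (congrFun hM i) j
  rw [h2]; ring

private lemma im_term_real (s : ℝ) (z w : ℂ) :
    ((starRingEnd ℂ) z * (↑s * w)).im = s * (z.re * w.im) - s * (z.im * w.re) := by
  simp [Complex.mul_im, Complex.mul_re]; ring

private lemma im_term_c (u z w : ℂ) :
    ((starRingEnd ℂ) z * (u * w)).im =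
      u.im * (z.re * w.re) + u.im * (z.im * w.im)
        + (u.re * (z.re * w.im) - u.re * (z.im * w.re)) := by
  simp [Complex.mul_im, Complex.mul_re]; ring

/-- If `X, Ξ ∈ ℝ^{n×n}` satisfy `XᵀΞ = ΞᵀX` and `ker X ∩ ker Ξ = {0}`, and
`C ∈ ℂ^{n×n}` is complex symmetric with positive definite imaginary part, then `Ξ − C X`
is invertible. -/
theorem xi_sub_C_mul_X_isUnit (n : ℕ) (X Ξ : Matrix (Fin n) (Fin n) ℝ)
    (hsym : Xᵀ * Ξ = Ξᵀ * X)
    (hker : ∀ v : Fin n → ℝ, X.mulVec v = 0 → Ξ.mulVec v = 0 → v = 0)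
    (C : Matrix (Fin n) (Fin n) ℂ) (hC : Cᵀ = C)
    (hIm : (C.map Complex.im).PosDef) :
    IsUnit (Ξ.map (Complex.ofReal) - C * X.map (Complex.ofReal)) := by
  set Xc := X.map (Complex.ofReal) with hXc
  set Ξc := Ξ.map (Complex.ofReal) with hΞc
  rw [Matrix.isUnit_iff_isUnit_det, isUnit_iff_ne_zero, Ne,
      ← Matrix.exists_mulVec_eq_zero_iff]
  rintro ⟨v, hv, hMv⟩
  apply hv
  have hEq : Ξc.mulVec v = C.mulVec (Xc.mulVec v) := by
    have h := hMv
    rw [Matrix.sub_mulVec] at h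
    rw [Matrix.mulVec_mulVec]
    linear_combination (norm := module) h
  set a : Fin n → ℝ := fun i => (v i).re with ha
  set b : Fin n → ℝ := fun i => (v i).im with hb
  set w : Fin n → ℂ := Xc.mulVec v with hw
  set p : Fin n → ℝ := fun i => (w i).re with hp
  set q : Fin n → ℝ := fun i => (w i).im with hq
  have hpX : p = X.mulVec a := by
    funext i
    simp [hp, hw, hXc, Matrix.mulVec, dotProduct, Complex.re_sum, ha]
  have hqX : q = X.mulVec b := by
    funext i
    simp [hq, hw, hXc, Matrix.mulVec, dotProduct, Complex.im_sum, hb]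
  set E : ℂ := star v ⬝ᵥ (Xcᵀ * Ξc).mulVec v with hE
  have hE1 : E = star w ⬝ᵥ C.mulVec w := by
    rw [hE, ← Matrix.mulVec_mulVec, Matrix.dotProduct_mulVec, Matrix.vecMul_transpose,
        hEq]
    congr 1
    funext i
    show (Xc.mulVec (star v)) i = star (w i)
    rw [hw]
    simp [hXc, Matrix.mulVec, dotProduct, star_sum]
  -- set S
  set S : Matrix (Fin n) (Fin n) ℝ := Xᵀ * Ξ with hS
  have hSsym : Sᵀ = S := by
    rw [hS, Matrix.transpose_mul, Matrix.transpose_transpose, ← hsym]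
  have hSc : Xcᵀ * Ξc = S.map Complex.ofReal := by
    rw [hXc, hΞc, hS, ← Matrix.transpose_map]
    exact (Matrix.map_mul (f := Complex.ofRealHom)).symm
  -- imaginary part of E is zero
  have hE0 : E.im = 0 := by
    rw [hE, hSc]
    have hexp : (star v ⬝ᵥ (S.map Complex.ofReal).mulVec v).im
        = ∑ i, ∑ j, (S i j * (a i * b j) - S i j * (b i * a j)) := by
      rw [dotProduct, Complex.im_sum]
      refine Finset.sum_congr rfl fun i _ => ?_
      rw [Matrix.mulVec, dotProduct, Finset.mul_sum, Complex.im_sum]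
      refine Finset.sum_congr rfl fun j _ => ?_
      have := im_term_real (S i j) (v i) (v j)
      simpa [Pi.star_apply, ha, hb] using this
    rw [hexp]
    simp only [Finset.sum_sub_distrib]
    rw [sym_swap S hSsym a b, sub_self]
  -- imaginary part of E via C
  set d : Matrix (Fin n) (Fin n) ℝ := C.map Complex.im with hd
  set c : Matrix (Fin n) (Fin n) ℝ := C.map Complex.re with hc
  have hcsym : cᵀ = c := by
    rw [hc, ← Matrix.transpose_map, hC]
  have hE2 : E.im = (∑ i, ∑ j, d i j * (p i * p j)) + ∑ i, ∑ j, d i j * (q i * q j) := by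
    have hexp : E.im = ∑ i, ∑ j,
        (d i j * (p i * p j) + d i j * (q i * q j)
          + (c i j * (p i * q j) - c i j * (q i * p j))) := by
      rw [hE1, dotProduct, Complex.im_sum]
      refine Finset.sum_congr rfl fun i _ => ?_
      rw [Matrix.mulVec, dotProduct, Finset.mul_sum, Complex.im_sum]
      refine Finset.sum_congr rfl fun j _ => ?_
      have := im_term_c (C i j) (w i) (w j)
      simpa [Pi.star_apply, hp, hq, hd, hc] using this
    rw [hexp]
    simp only [Finset.sum_add_distrib, Finset.sum_sub_distrib]
    rw [sym_swap c hcsym p q, sub_self, add_zero]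
  have hdpp : ∀ x : Fin n → ℝ, ∑ i, ∑ j, d i j * (x i * x j) = x ⬝ᵥ d.mulVec x := by
    intro x
    rw [dotProduct]
    refine Finset.sum_congr rfl fun i _ => ?_
    rw [Matrix.mulVec, dotProduct, Finset.mul_sum]
    exact Finset.sum_congr rfl fun j _ => by ring
  have hsum0 : p ⬝ᵥ d.mulVec p + q ⬝ᵥ d.mulVec q = 0 := by
    rw [← hdpp p, ← hdpp q, ← hE2, hE0]
  have hple : 0 ≤ p ⬝ᵥ d.mulVec p := by simpa using hIm.posSemidef.dotProduct_mulVec_nonneg p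
  have hqle : 0 ≤ q ⬝ᵥ d.mulVec q := by simpa using hIm.posSemidef.dotProduct_mulVec_nonneg q
  have hp0 : p = 0 := by
    by_contra hne
    have := hIm.dotProduct_mulVec_pos hne
    simp only [star_trivial] at this
    linarith
  have hq0 : q = 0 := by
    by_contra hne
    have := hIm.dotProduct_mulVec_pos hne
    simp only [star_trivial] at this
    linarith
  have hw0 : w = 0 := by
    funext i
    exact Complex.ext (congrFun hp0 i) (congrFun hq0 i)
  have hΞv0 : Ξc.mulVec v = 0 := by rw [hEq, hw0, Matrix.mulVec_zero]
  have hXa : X.mulVec a = 0 := hpX.symm.trans hp0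
  have hXb : X.mulVec b = 0 := hqX.symm.trans hq0
  have hΞa : Ξ.mulVec a = 0 := by
    funext i
    have h1 : ((Ξc.mulVec v) i).re = (Ξ.mulVec a) i := by
      simp [hΞc, Matrix.mulVec, dotProduct, Complex.re_sum, ha]
    rw [← h1, hΞv0]
    simp
  have hΞb : Ξ.mulVec b = 0 := by
    funext i
    have h1 : ((Ξc.mulVec v) i).im = (Ξ.mulVec b) i := by
      simp [hΞc, Matrix.mulVec, dotProduct, Complex.im_sum, hb]
    rw [← h1, hΞv0]
    simp
  have ha0 : a = 0 := hker a hXa hΞa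
  have hb0 : b = 0 := hker b hXb hΞb
  funext i
  exact Complex.ext (congrFun ha0 i) (congrFun hb0 i)
end

section
/- Let U ⊆ ℝⁿ × ℝⁿ be open, let x*, ξ* : U → ℝⁿ be smooth with (x*_η)ᵀξ* = 0 on U, and let φ : ℝⁿ × U → ℂ be smooth with φ(x*(y,η); y, η) = 0 and ∇_x φ(x*(y,η); y, η) = ξ*(y,η) for all (y,η) ∈ U. Then for all (y,η) ∈ U: ∇_η φ(x*(y,η); y, η) = 0 and φ_{ηη}(x*(y,η); y, η) = −(x*_η(y,η))ᵀ · φ_{xη}(x*(y,η); y, η). -/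
open Matrix

/-- The continuous linear map `(u, v) ↦ A u + B v` on `ℝⁿ × ℝⁿ`; a map whose derivative at a
point has this form has `y`-Jacobian `A` and `η`-Jacobian `B` there. -/
noncomputable def jacCLM {n : ℕ} (A B : Matrix (Fin n) (Fin n) ℝ) :
    ((Fin n → ℝ) × (Fin n → ℝ)) →L[ℝ] (Fin n → ℝ) :=
  LinearMap.toContinuousLinearMap
    (A.mulVecLin.comp (LinearMap.fst ℝ (Fin n → ℝ) (Fin n → ℝ)) +
      B.mulVecLin.comp (LinearMap.snd ℝ (Fin n → ℝ) (Fin n → ℝ)))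

lemma clm_triple_decomp {n : ℕ}
    (L : ((Fin n → ℝ) × (Fin n → ℝ) × (Fin n → ℝ)) →L[ℝ] ℂ) (u w : Fin n → ℝ) :
    L (u, 0, w) = (∑ i, (u i : ℂ) * L (Pi.single i 1, 0, 0)) +
      ∑ k, (w k : ℂ) * L (0, 0, Pi.single k 1) := by
  have h : (u, (0 : Fin n → ℝ), w) =
      (∑ i, u i • ((Pi.single i 1 : Fin n → ℝ), (0 : Fin n → ℝ), (0 : Fin n → ℝ)))
        + ∑ k, w k • ((0 : Fin n → ℝ), (0 : Fin n → ℝ), (Pi.single k 1 : Fin n → ℝ)) := by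
    have hu : u = ∑ i, u i • (Pi.single i 1 : Fin n → ℝ) := by
      ext j; simp [Pi.single_apply, Finset.sum_apply]
    have hw : w = ∑ k, w k • (Pi.single k 1 : Fin n → ℝ) := by
      ext j; simp [Pi.single_apply, Finset.sum_apply]
    refine Prod.ext ?_ (Prod.ext ?_ ?_) <;>
      simp [Prod.fst_sum, Prod.snd_sum, ← hu, ← hw]
  rw [h, map_add, map_sum, map_sum]
  congr 1 <;> refine Finset.sum_congr rfl fun i _ => ?_ <;>
    rw [L.map_smul, Complex.real_smul]


/-- If `(x*_η)ᵀ ξ* = 0` on `U` and the phase `φ` satisfies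
`φ(x*(y,η); y, η) = 0`, `∇_x φ(x*(y,η); y, η) = ξ*(y,η)`, then
`∇_η φ(x*(y,η); y, η) = 0` and `φ_{ηη}(x*; y, η) = −(x*_η)ᵀ φ_{xη}(x*; y, η)`, entrywise:
the `(k,l)` entry of `φ_{ηη}` equals `−∑_i (x*_η)_{ik} (φ_{xη})_{il}`. -/
theorem phase_eta_derivative_formulas (n : ℕ)
    (U : Set ((Fin n → ℝ) × (Fin n → ℝ))) (hUopen : IsOpen U)
    (xs ξs : (Fin n → ℝ) × (Fin n → ℝ) → Fin n → ℝ)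
    (hxs : ContDiffOn ℝ (⊤ : ℕ∞) xs U) (hξs : ContDiffOn ℝ (⊤ : ℕ∞) ξs U)
    (Xy Xη : (Fin n → ℝ) × (Fin n → ℝ) → Matrix (Fin n) (Fin n) ℝ)
    (hdx : ∀ p ∈ U, HasFDerivAt xs (jacCLM (Xy p) (Xη p)) p)
    (hone : ∀ p ∈ U, (Xη p)ᵀ *ᵥ ξs p = 0)
    (φ : (Fin n → ℝ) × ((Fin n → ℝ) × (Fin n → ℝ)) → ℂ)
    (hφ : ContDiffOn ℝ (⊤ : ℕ∞) φ (Set.univ ×ˢ U))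
    (h0 : ∀ p ∈ U, φ (xs p, p) = 0)
    (h1 : ∀ p ∈ U, ∀ i : Fin n,
      fderiv ℝ φ (xs p, p) (Pi.single i 1, 0, 0) = (ξs p i : ℂ)) :
    ∀ p ∈ U,
      (∀ k : Fin n, fderiv ℝ φ (xs p, p) (0, 0, Pi.single k 1) = 0) ∧
      (∀ k l : Fin n,
        fderiv ℝ (fun q => fderiv ℝ φ q (0, 0, Pi.single k 1)) (xs p, p) (0, 0, Pi.single l 1) =
          -∑ i : Fin n, (Xη p i k : ℂ) *
            fderiv ℝ (fun q => fderiv ℝ φ q (Pi.single i 1, 0, 0)) (xs p, p)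
              (0, 0, Pi.single l 1)) := by
  have hopen : IsOpen ((Set.univ : Set (Fin n → ℝ)) ×ˢ U) := isOpen_univ.prod hUopen
  have hdiffAt : ∀ q ∈ (Set.univ : Set (Fin n → ℝ)) ×ˢ U, DifferentiableAt ℝ φ q := fun q hq =>
    (hφ.contDiffAt (hopen.mem_nhds hq)).differentiableAt (by simp)
  -- derivative of p ↦ (xs p, p)
  have hS : ∀ p ∈ U, HasFDerivAt (fun q => (xs q, q))
      ((jacCLM (Xy p) (Xη p)).prod (ContinuousLinearMap.id ℝ _)) p := fun p hp =>
    HasFDerivAt.prodMk (hdx p hp) (hasFDerivAt_id p)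
  -- evaluation of jacCLM
  have hjac : ∀ (A Bm : Matrix (Fin n) (Fin n) ℝ) (v₁ v₂ : Fin n → ℝ),
      jacCLM A Bm (v₁, v₂) = A *ᵥ v₁ + Bm *ᵥ v₂ := fun A Bm v₁ v₂ => rfl
  -- Claim 1, at every point of U
  have claim1 : ∀ p ∈ U, ∀ k : Fin n, fderiv ℝ φ (xs p, p) (0, 0, Pi.single k 1) = 0 := by
    intro p hp k
    have hz : ((xs p, p) : (Fin n → ℝ) × ((Fin n → ℝ) × (Fin n → ℝ))) ∈
        (Set.univ : Set (Fin n → ℝ)) ×ˢ U := ⟨trivial, hp⟩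
    have hcomp : HasFDerivAt (φ ∘ fun q => (xs q, q))
        ((fderiv ℝ φ (xs p, p)).comp
          ((jacCLM (Xy p) (Xη p)).prod (ContinuousLinearMap.id ℝ _))) p :=
      HasFDerivAt.comp p ((hdiffAt _ hz).hasFDerivAt) (hS p hp)
    have hzero : HasFDerivAt (fun q => φ (xs q, q))
        (0 : ((Fin n → ℝ) × (Fin n → ℝ)) →L[ℝ] ℂ) p := by
      have he : (fun q => φ (xs q, q)) =ᶠ[nhds p] fun _ => (0 : ℂ) := by
        filter_upwards [hUopen.mem_nhds hp] with q hq using h0 q hq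
      exact (hasFDerivAt_const (0 : ℂ) p).congr_of_eventuallyEq he
    have heq := hcomp.unique hzero
    have hev := congrArg (fun L : ((Fin n → ℝ) × (Fin n → ℝ)) →L[ℝ] ℂ =>
      L ((0 : Fin n → ℝ), Pi.single k 1)) heq
    simp only [ContinuousLinearMap.coe_comp', Function.comp_apply,
      ContinuousLinearMap.prod_apply, ContinuousLinearMap.coe_id', id_eq,
      ContinuousLinearMap.zero_apply] at hev
    rw [hjac] at hev
    simp only [Matrix.mulVec_zero, zero_add] at hev
    rw [clm_triple_decomp] at hev
    have hsum2 : (∑ j, ((Pi.single k 1 : Fin n → ℝ) j : ℂ) *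
        fderiv ℝ φ (xs p, p) (0, 0, Pi.single j 1)) =
        fderiv ℝ φ (xs p, p) (0, 0, Pi.single k 1) := by
      rw [Finset.sum_eq_single k]
      · simp
      · intro j _ hj; simp [Pi.single_apply, hj]
      · simp
    have hsum1 : (∑ i, (((Xη p *ᵥ Pi.single k 1) i : ℝ) : ℂ) *
        fderiv ℝ φ (xs p, p) (Pi.single i 1, 0, 0)) = 0 := by
      have h1' : ∀ i, fderiv ℝ φ (xs p, p) (Pi.single i 1, 0, 0) = (ξs p i : ℂ) := h1 p hp
      have hzero' : (∑ i, Xη p i k * ξs p i) = 0 := by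
        have := congrFun (hone p hp) k
        simpa [Matrix.mulVec, dotProduct, Matrix.transpose_apply, mul_comm] using this
      calc (∑ i, (((Xη p *ᵥ Pi.single k 1) i : ℝ) : ℂ) *
            fderiv ℝ φ (xs p, p) (Pi.single i 1, 0, 0))
          = ∑ i, ((Xη p i k * ξs p i : ℝ) : ℂ) := by
            refine Finset.sum_congr rfl fun i _ => ?_
            rw [h1']
            push_cast
            congr 1
            · norm_cast
              simp [Matrix.mulVec_single]
        _ = ((∑ i, Xη p i k * ξs p i : ℝ) : ℂ) := by push_cast; ring
        _ = 0 := by rw [hzero']; norm_cast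
    rw [hsum1, hsum2, zero_add] at hev
    exact hev
  intro p hp
  refine ⟨claim1 p hp, ?_⟩
  -- second derivative setup
  have hz : ((xs p, p) : (Fin n → ℝ) × ((Fin n → ℝ) × (Fin n → ℝ))) ∈
      (Set.univ : Set (Fin n → ℝ)) ×ˢ U := ⟨trivial, hp⟩
  have hnhds : (Set.univ : Set (Fin n → ℝ)) ×ˢ U ∈ nhds (xs p, p) := hopen.mem_nhds hz
  have hφAt : ContDiffAt ℝ (⊤ : ℕ∞) φ (xs p, p) := hφ.contDiffAt hnhds
  have hBdiff : DifferentiableAt ℝ (fderiv ℝ φ) (xs p, p) :=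
    (hφAt.fderiv_right (m := (⊤ : ℕ∞)) (by simp)).differentiableAt (by simp)
  set B := fderiv ℝ (fderiv ℝ φ) (xs p, p) with hBdef
  have hB : HasFDerivAt (fderiv ℝ φ) B (xs p, p) := hBdiff.hasFDerivAt
  have hEv : ∀ᶠ q in nhds (xs p, p), HasFDerivAt φ (fderiv ℝ φ q) q := by
    filter_upwards [hnhds] with q hq using (hdiffAt q hq).hasFDerivAt
  have hsymm : ∀ a b, B a b = B b a := fun a b =>
    second_derivative_symmetric_of_eventually_of_real hEv hB a b
  -- fderiv of q ↦ fderiv φ q v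
  have key : ∀ v : (Fin n → ℝ) × ((Fin n → ℝ) × (Fin n → ℝ)),
      fderiv ℝ (fun q => fderiv ℝ φ q v) (xs p, p) =
        (ContinuousLinearMap.apply ℝ ℂ v).comp B := fun v =>
    ((ContinuousLinearMap.apply ℝ ℂ v).hasFDerivAt.comp (xs p, p) hB).fderiv
  -- key identity: for all k l, B (0,0,e_l) (0,0,e_k) = -∑ i Xη i l * B (e_i,0,0) (0,0,e_k)
  have eqkl : ∀ k l : Fin n,
      B (0, 0, Pi.single l 1) (0, 0, Pi.single k 1) =
        -∑ i, (Xη p i l : ℂ) * B (Pi.single i 1, 0, 0) (0, 0, Pi.single k 1) := by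
    intro k l
    set v : (Fin n → ℝ) × ((Fin n → ℝ) × (Fin n → ℝ)) :=
      ((0 : Fin n → ℝ), (0 : Fin n → ℝ), (Pi.single k 1 : Fin n → ℝ)) with hv
    have hAk : HasFDerivAt (fun q => fderiv ℝ φ q v)
        ((ContinuousLinearMap.apply ℝ ℂ v).comp B) (xs p, p) :=
      (ContinuousLinearMap.apply ℝ ℂ v).hasFDerivAt.comp (xs p, p) hB
    have hG : HasFDerivAt ((fun q => fderiv ℝ φ q v) ∘ fun q => (xs q, q))
        (((ContinuousLinearMap.apply ℝ ℂ v).comp B).comp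
          ((jacCLM (Xy p) (Xη p)).prod (ContinuousLinearMap.id ℝ _))) p :=
      HasFDerivAt.comp p hAk (hS p hp)
    have hzero : HasFDerivAt (fun p' => fderiv ℝ φ (xs p', p') v)
        (0 : ((Fin n → ℝ) × (Fin n → ℝ)) →L[ℝ] ℂ) p := by
      have he : (fun p' => fderiv ℝ φ (xs p', p') v) =ᶠ[nhds p] fun _ => (0 : ℂ) := by
        filter_upwards [hUopen.mem_nhds hp] with q hq using claim1 q hq k
      exact (hasFDerivAt_const (0 : ℂ) p).congr_of_eventuallyEq he
    have heq := hG.unique hzero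
    have hev := congrArg (fun L : ((Fin n → ℝ) × (Fin n → ℝ)) →L[ℝ] ℂ =>
      L ((0 : Fin n → ℝ), Pi.single l 1)) heq
    simp only [ContinuousLinearMap.coe_comp', Function.comp_apply,
      ContinuousLinearMap.prod_apply, ContinuousLinearMap.coe_id', id_eq,
      ContinuousLinearMap.zero_apply] at hev
    rw [hjac] at hev
    simp only [Matrix.mulVec_zero, zero_add] at hev
    simp only [ContinuousLinearMap.apply_apply] at hev
    have hdec := clm_triple_decomp ((ContinuousLinearMap.apply ℝ ℂ v).comp B)
      (Xη p *ᵥ Pi.single l 1) (Pi.single l 1)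
    simp only [ContinuousLinearMap.coe_comp', Function.comp_apply,
      ContinuousLinearMap.apply_apply] at hdec
    rw [hdec] at hev
    have hsum2 : (∑ j, ((Pi.single l 1 : Fin n → ℝ) j : ℂ) *
        B (0, 0, Pi.single j 1) v) = B (0, 0, Pi.single l 1) v := by
      rw [Finset.sum_eq_single l]
      · simp
      · intro j _ hj; simp [Pi.single_apply, hj]
      · simp
    have hsum1 : (∑ i, (((Xη p *ᵥ Pi.single l 1) i : ℝ) : ℂ) *
        B (Pi.single i 1, 0, 0) v) =
        ∑ i, (Xη p i l : ℂ) * B (Pi.single i 1, 0, 0) v := by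
      refine Finset.sum_congr rfl fun i _ => ?_
      congr 2
      norm_cast
      simp [Matrix.mulVec_single]
    rw [hsum1, hsum2] at hev
    rw [hv] at hev ⊢
    linear_combination hev
  intro k l
  simp only [key, ContinuousLinearMap.coe_comp', Function.comp_apply,
    ContinuousLinearMap.apply_apply]
  rw [hsymm ((0 : Fin n → ℝ), (0 : Fin n → ℝ), (Pi.single l 1 : Fin n → ℝ))
    ((0 : Fin n → ℝ), (0 : Fin n → ℝ), (Pi.single k 1 : Fin n → ℝ))]
  rw [eqkl l k]
  congr 1
  refine Finset.sum_congr rfl fun i _ => ?_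
  rw [hsymm]
end

section
/- Let V ⊆ ℝⁿ × ℝⁿ and U ⊆ ℝⁿ × ℝⁿ be open, let z², ζ² : V → ℝⁿ be smooth with (z²_ξ)ᵀζ² = 0 and (z²_x)ᵀζ² = ξ at every point (x,ξ) ∈ V, let z¹, ζ¹ : U → ℝⁿ be smooth, and let ξ̂ : W → ℝⁿ be smooth on an open set W ⊆ ℝⁿ × U with (x, ξ̂(x;y,η)) ∈ V and ζ²(x, ξ̂(x;y,η)) = ζ¹(y,η) for all (x;y,η) ∈ W. Define φ(x;y,η) = ⟨z²(x, ξ̂(x;y,η)) − z¹(y,η), ζ¹(y,η)⟩. Then ∇_x φ(x;y,η) = ξ̂(x;y,η) on W. Moreover, if x*, ξ* : U → ℝⁿ are smooth with z²(x*(y,η), ξ*(y,η)) = z¹(y,η), ζ²(x*(y,η), ξ*(y,η)) = ζ¹(y,η) and ξ̂(x*(y,η); y, η) = ξ*(y,η), then φ(x*(y,η); y, η) = 0. -/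
open Matrix

lemma jacCLM_apply {n : ℕ} (A B : Matrix (Fin n) (Fin n) ℝ) (u v : Fin n → ℝ) :
    jacCLM A B (u, v) = A *ᵥ u + B *ᵥ v := by
  simp [jacCLM]

/-- With `Φ₂ : (x,ξ) ↦ (z²,ζ²)` preserving the 1-form
(`(z²_ξ)ᵀζ² = 0`, `(z²_x)ᵀζ² = ξ` on `V`), `ξ̂` solving `ζ²(x, ξ̂(x;y,η)) = ζ¹(y,η)` on `W`,
and `φ(x;y,η) = ⟨z²(x, ξ̂(x;y,η)) − z¹(y,η), ζ¹(y,η)⟩`, one has `∇_x φ = ξ̂` on `W`;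
moreover if `z²(x*,ξ*) = z¹`, `ζ²(x*,ξ*) = ζ¹` and `ξ̂(x*;y,η) = ξ*` then `φ(x*;y,η) = 0`. -/
theorem composition_phase_x_derivative (n : ℕ)
    (V U : Set ((Fin n → ℝ) × (Fin n → ℝ))) (hVopen : IsOpen V) (hUopen : IsOpen U)
    (z2 ζ2 : (Fin n → ℝ) × (Fin n → ℝ) → Fin n → ℝ)
    (hz2 : ContDiffOn ℝ (⊤ : ℕ∞) z2 V) (hζ2 : ContDiffOn ℝ (⊤ : ℕ∞) ζ2 V)
    (Z2x Z2ξ : (Fin n → ℝ) × (Fin n → ℝ) → Matrix (Fin n) (Fin n) ℝ)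
    (hdz2 : ∀ p ∈ V, HasFDerivAt z2 (jacCLM (Z2x p) (Z2ξ p)) p)
    (hrel1 : ∀ p ∈ V, (Z2ξ p)ᵀ *ᵥ ζ2 p = 0)
    (hrel2 : ∀ p ∈ V, (Z2x p)ᵀ *ᵥ ζ2 p = p.2)
    (z1 ζ1 : (Fin n → ℝ) × (Fin n → ℝ) → Fin n → ℝ)
    (hz1 : ContDiffOn ℝ (⊤ : ℕ∞) z1 U) (hζ1 : ContDiffOn ℝ (⊤ : ℕ∞) ζ1 U)
    (W : Set ((Fin n → ℝ) × ((Fin n → ℝ) × (Fin n → ℝ)))) (hWopen : IsOpen W)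
    (hWU : ∀ q ∈ W, q.2 ∈ U)
    (ξhat : (Fin n → ℝ) × ((Fin n → ℝ) × (Fin n → ℝ)) → Fin n → ℝ)
    (hξhat : ContDiffOn ℝ (⊤ : ℕ∞) ξhat W)
    (hmemV : ∀ q ∈ W, (q.1, ξhat q) ∈ V)
    (hζeq : ∀ q ∈ W, ζ2 (q.1, ξhat q) = ζ1 q.2)
    (φ : (Fin n → ℝ) × ((Fin n → ℝ) × (Fin n → ℝ)) → ℝ)
    (hφdef : ∀ q, φ q = (z2 (q.1, ξhat q) - z1 q.2) ⬝ᵥ ζ1 q.2)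
    (xs ξs : (Fin n → ℝ) × (Fin n → ℝ) → Fin n → ℝ)
    (hxss : ContDiffOn ℝ (⊤ : ℕ∞) xs U) (hξss : ContDiffOn ℝ (⊤ : ℕ∞) ξs U)
    (hz12 : ∀ p ∈ U, z2 (xs p, ξs p) = z1 p)
    (hζ12 : ∀ p ∈ U, ζ2 (xs p, ξs p) = ζ1 p)
    (hξhs : ∀ p ∈ U, ξhat (xs p, p) = ξs p) :
    (∀ q ∈ W, ∀ i : Fin n, fderiv ℝ φ q (Pi.single i 1, 0, 0) = ξhat q i) ∧
    (∀ p ∈ U, φ (xs p, p) = 0) := by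
  constructor
  · intro q hq i
    have hqU : q.2 ∈ U := hWU q hq
    set p : (Fin n → ℝ) × (Fin n → ℝ) := (q.1, ξhat q) with hp
    have hpV : p ∈ V := hmemV q hq
    -- derivative of ξhat at q
    have hξdiff : DifferentiableAt ℝ ξhat q :=
      (hξhat.contDiffAt (hWopen.mem_nhds hq)).differentiableAt (by simp)
    set Dξ := fderiv ℝ ξhat q with hDξdef
    have hDξ : HasFDerivAt ξhat Dξ q := hξdiff.hasFDerivAt
    -- derivative of g : q ↦ (q.1, ξhat q)
    have hg : HasFDerivAt (fun q : (Fin n → ℝ) × ((Fin n → ℝ) × (Fin n → ℝ)) => (q.1, ξhat q))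
        ((ContinuousLinearMap.fst ℝ (Fin n → ℝ) ((Fin n → ℝ) × (Fin n → ℝ))).prod Dξ) q :=
      (hasFDerivAt_fst).prodMk hDξ
    have hz2g : HasFDerivAt (fun q : (Fin n → ℝ) × ((Fin n → ℝ) × (Fin n → ℝ)) =>
        z2 (q.1, ξhat q))
        ((jacCLM (Z2x p) (Z2ξ p)).comp
          ((ContinuousLinearMap.fst ℝ (Fin n → ℝ) ((Fin n → ℝ) × (Fin n → ℝ))).prod Dξ)) q :=
      (hdz2 p hpV).comp q hg
    -- derivatives of z1, ζ1 at q.2, composed with snd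
    have hz1d : DifferentiableAt ℝ z1 q.2 :=
      (hz1.contDiffAt (hUopen.mem_nhds hqU)).differentiableAt (by simp)
    have hζ1d : DifferentiableAt ℝ ζ1 q.2 :=
      (hζ1.contDiffAt (hUopen.mem_nhds hqU)).differentiableAt (by simp)
    set D1 := fderiv ℝ z1 q.2 with hD1def
    set Dζ := fderiv ℝ ζ1 q.2 with hDζdef
    have hz1comp : HasFDerivAt (fun q : (Fin n → ℝ) × ((Fin n → ℝ) × (Fin n → ℝ)) => z1 q.2)
        (D1.comp (ContinuousLinearMap.snd ℝ (Fin n → ℝ) ((Fin n → ℝ) × (Fin n → ℝ)))) q :=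
      hz1d.hasFDerivAt.comp q hasFDerivAt_snd
    have hζ1comp : HasFDerivAt (fun q : (Fin n → ℝ) × ((Fin n → ℝ) × (Fin n → ℝ)) => ζ1 q.2)
        (Dζ.comp (ContinuousLinearMap.snd ℝ (Fin n → ℝ) ((Fin n → ℝ) × (Fin n → ℝ)))) q :=
      hζ1d.hasFDerivAt.comp q hasFDerivAt_snd
    set A := ((jacCLM (Z2x p) (Z2ξ p)).comp
          ((ContinuousLinearMap.fst ℝ (Fin n → ℝ) ((Fin n → ℝ) × (Fin n → ℝ))).prod Dξ)) -
        (D1.comp (ContinuousLinearMap.snd ℝ (Fin n → ℝ) ((Fin n → ℝ) × (Fin n → ℝ)))) with hA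
    set C := Dζ.comp (ContinuousLinearMap.snd ℝ (Fin n → ℝ) ((Fin n → ℝ) × (Fin n → ℝ))) with hC
    have hsub : HasFDerivAt (fun q : (Fin n → ℝ) × ((Fin n → ℝ) × (Fin n → ℝ)) =>
        z2 (q.1, ξhat q) - z1 q.2) A q := hz2g.sub hz1comp
    -- coordinate derivatives
    have hcoordsub : ∀ j : Fin n, HasFDerivAt (fun q : (Fin n → ℝ) × ((Fin n → ℝ) × (Fin n → ℝ)) =>
        (z2 (q.1, ξhat q) - z1 q.2) j) ((ContinuousLinearMap.proj j).comp A) q := fun j =>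
      hasFDerivAt_pi'.mp hsub j
    have hcoordζ : ∀ j : Fin n, HasFDerivAt (fun q : (Fin n → ℝ) × ((Fin n → ℝ) × (Fin n → ℝ)) =>
        ζ1 q.2 j) ((ContinuousLinearMap.proj j).comp C) q := fun j =>
      hasFDerivAt_pi'.mp hζ1comp j
    have hterm : ∀ j : Fin n, HasFDerivAt
        (fun q : (Fin n → ℝ) × ((Fin n → ℝ) × (Fin n → ℝ)) =>
          (z2 (q.1, ξhat q) - z1 q.2) j * ζ1 q.2 j)
        ((z2 (q.1, ξhat q) - z1 q.2) j • ((ContinuousLinearMap.proj j).comp C) +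
          ζ1 q.2 j • ((ContinuousLinearMap.proj j).comp A)) q := fun j =>
      (hcoordsub j).mul (hcoordζ j)
    have hφeq : φ = fun q : (Fin n → ℝ) × ((Fin n → ℝ) × (Fin n → ℝ)) =>
        ∑ j : Fin n, (z2 (q.1, ξhat q) - z1 q.2) j * ζ1 q.2 j := by
      funext q'
      rw [hφdef q']
      rfl
    have hφd : HasFDerivAt φ
        (∑ j : Fin n, ((z2 (q.1, ξhat q) - z1 q.2) j • ((ContinuousLinearMap.proj j).comp C) +
          ζ1 q.2 j • ((ContinuousLinearMap.proj j).comp A))) q := by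
      rw [hφeq]
      exact HasFDerivAt.fun_sum (fun j _ => hterm j)
    rw [hφd.fderiv]
    -- evaluate at (Pi.single i 1, 0, 0)
    have hCval : C (Pi.single i 1, (0 : Fin n → ℝ), (0 : Fin n → ℝ)) = 0 := by
      simp [hC]
      exact map_zero _
    have hAval : A (Pi.single i 1, (0 : Fin n → ℝ), (0 : Fin n → ℝ)) =
        Z2x p *ᵥ Pi.single i 1 + Z2ξ p *ᵥ Dξ (Pi.single i 1, 0, 0) := by
      simp [hA, jacCLM_apply]
      exact map_zero _
    have key : ζ2 p ⬝ᵥ (Z2x p *ᵥ Pi.single i 1 + Z2ξ p *ᵥ Dξ (Pi.single i 1, 0, 0)) =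
        ξhat q i := by
      rw [dotProduct_add, dotProduct_mulVec, dotProduct_mulVec,
        ← mulVec_transpose, ← mulVec_transpose, hrel1 p hpV, hrel2 p hpV]
      simp [dotProduct_single]
      rfl
    calc (∑ j : Fin n, ((z2 (q.1, ξhat q) - z1 q.2) j • ((ContinuousLinearMap.proj j).comp C) +
          ζ1 q.2 j • ((ContinuousLinearMap.proj j).comp A))) (Pi.single i 1, 0, 0)
        = ∑ j : Fin n, ζ1 q.2 j * A (Pi.single i 1, 0, 0) j := by
          rw [ContinuousLinearMap.sum_apply]
          refine Finset.sum_congr rfl fun j _ => ?_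
          simp [hCval]
      _ = ζ2 p ⬝ᵥ A (Pi.single i 1, 0, 0) := by
          rw [hp, hζeq q hq]; rfl
      _ = ξhat q i := by rw [hAval]; exact key
  · intro p hpU
    rw [hφdef, hξhs p hpU, hz12 p hpU]
    simp
end

section
/- Let z¹, ζ¹ : U → ℝⁿ and z², ζ² : V → ℝⁿ be smooth maps on open sets U, V ⊆ ℝⁿ × ℝⁿ satisfying the 1-form relations (z¹_η)ᵀζ¹ = 0 on U and (z²_ξ)ᵀζ² = 0 on V. Let x*, ξ* : U → ℝⁿ and ξ̂ : W → ℝⁿ be smooth with ζ²(x, ξ̂(x;y,η)) = ζ¹(y,η) on W ⊆ ℝⁿ × U, ξ̂(x*(y,η);y,η) = ξ*(y,η), z²(x*(y,η), ξ*(y,η)) = z¹(y,η), and suppose ζ²_ξ is invertible along (x*, ξ*). Define φ(x;y,η) = ⟨z²(x, ξ̂(x;y,η)) − z¹(y,η), ζ¹(y,η)⟩. Then ∇_η φ(x;y,η) = (ζ¹_η(y,η))ᵀ (z²(x, ξ̂(x;y,η)) − z¹(y,η)), and at x = x*(y,η) the Hessian in η satisfies φ_{ηη}(x*(y,η); y,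 η) = (ζ¹_η(y,η))ᵀ ( z²_ξ(x*,ξ*) (ζ²_ξ(x*,ξ*))⁻¹ ζ¹_η(y,η) − z¹_η(y,η) ). -/
open Matrix

/-- With `Φ₁ : (y,η) ↦ (z¹,ζ¹)` and `Φ₂ : (x,ξ) ↦ (z²,ζ²)` preserving the
1-form (`(z¹_η)ᵀζ¹ = 0` on `U`, `(z²_ξ)ᵀζ² = 0` on `V`), `ξ̂` solving `ζ²(x,ξ̂) = ζ¹`,
`ξ̂(x*;y,η) = ξ*`, `z²(x*,ξ*) = z¹`, and `ζ²_ξ` invertible along `(x*,ξ*)`, the composition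
phase `φ(x;y,η) = ⟨z²(x, ξ̂(x;y,η)) − z¹(y,η), ζ¹(y,η)⟩` satisfies
`∇_η φ = (ζ¹_η)ᵀ (z²(x,ξ̂) − z¹)` on `W` and, at `x = x*(y,η)`,
`φ_{ηη}(x*;y,η) = (ζ¹_η)ᵀ (z²_ξ (ζ²_ξ)⁻¹ ζ¹_η − z¹_η)`. -/
theorem composition_phase_eta_derivatives (n : ℕ)
    (V U : Set ((Fin n → ℝ) × (Fin n → ℝ))) (hVopen : IsOpen V) (hUopen : IsOpen U)
    (z2 ζ2 : (Fin n → ℝ) × (Fin n → ℝ) → Fin n → ℝ)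
    (hz2 : ContDiffOn ℝ (⊤ : ℕ∞) z2 V) (hζ2 : ContDiffOn ℝ (⊤ : ℕ∞) ζ2 V)
    (Z2x Z2ξ W2x W2ξ : (Fin n → ℝ) × (Fin n → ℝ) → Matrix (Fin n) (Fin n) ℝ)
    (hdz2 : ∀ p ∈ V, HasFDerivAt z2 (jacCLM (Z2x p) (Z2ξ p)) p)
    (hdζ2 : ∀ p ∈ V, HasFDerivAt ζ2 (jacCLM (W2x p) (W2ξ p)) p)
    (hrel2 : ∀ p ∈ V, (Z2ξ p)ᵀ *ᵥ ζ2 p = 0)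
    (z1 ζ1 : (Fin n → ℝ) × (Fin n → ℝ) → Fin n → ℝ)
    (hz1 : ContDiffOn ℝ (⊤ : ℕ∞) z1 U) (hζ1 : ContDiffOn ℝ (⊤ : ℕ∞) ζ1 U)
    (Z1y Z1η W1y W1η : (Fin n → ℝ) × (Fin n → ℝ) → Matrix (Fin n) (Fin n) ℝ)
    (hdz1 : ∀ p ∈ U, HasFDerivAt z1 (jacCLM (Z1y p) (Z1η p)) p)
    (hdζ1 : ∀ p ∈ U, HasFDerivAt ζ1 (jacCLM (W1y p) (W1η p)) p)
    (hrel1 : ∀ p ∈ U, (Z1η p)ᵀ *ᵥ ζ1 p = 0)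
    (W : Set ((Fin n → ℝ) × ((Fin n → ℝ) × (Fin n → ℝ)))) (hWopen : IsOpen W)
    (hWU : ∀ q ∈ W, q.2 ∈ U)
    (ξhat : (Fin n → ℝ) × ((Fin n → ℝ) × (Fin n → ℝ)) → Fin n → ℝ)
    (hξhat : ContDiffOn ℝ (⊤ : ℕ∞) ξhat W)
    (hmemV : ∀ q ∈ W, (q.1, ξhat q) ∈ V)
    (hζeq : ∀ q ∈ W, ζ2 (q.1, ξhat q) = ζ1 q.2)
    (xs ξs : (Fin n → ℝ) × (Fin n → ℝ) → Fin n → ℝ)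
    (hxss : ContDiffOn ℝ (⊤ : ℕ∞) xs U) (hξss : ContDiffOn ℝ (⊤ : ℕ∞) ξs U)
    (hmemW : ∀ p ∈ U, (xs p, p) ∈ W)
    (hmemVs : ∀ p ∈ U, (xs p, ξs p) ∈ V)
    (hξhs : ∀ p ∈ U, ξhat (xs p, p) = ξs p)
    (hz12 : ∀ p ∈ U, z2 (xs p, ξs p) = z1 p)
    (hinv : ∀ p ∈ U, IsUnit (W2ξ (xs p, ξs p)))
    (φ : (Fin n → ℝ) × ((Fin n → ℝ) × (Fin n → ℝ)) → ℝ)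
    (hφdef : ∀ q, φ q = (z2 (q.1, ξhat q) - z1 q.2) ⬝ᵥ ζ1 q.2) :
    (∀ q ∈ W, ∀ k : Fin n,
      fderiv ℝ φ q (0, 0, Pi.single k 1) =
        ((W1η q.2)ᵀ *ᵥ (z2 (q.1, ξhat q) - z1 q.2)) k) ∧
    (∀ p ∈ U, ∀ k l : Fin n,
      fderiv ℝ (fun r => fderiv ℝ φ r (0, 0, Pi.single k 1)) (xs p, p) (0, 0, Pi.single l 1) =
        ((W1η p)ᵀ *
          (Z2ξ (xs p, ξs p) * (W2ξ (xs p, ξs p))⁻¹ * W1η p - Z1η p)) k l) := by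
  classical
  have coeF : ∀ {E : Type} [inst : NormedAddCommGroup E] [inst2 : NormedSpace ℝ E]
      (f : E → Fin n → ℝ) (f' : E →L[ℝ] (Fin n → ℝ)) (x : E) (i : Fin n),
      HasFDerivAt f f' x →
      HasFDerivAt (fun y => f y i) ((ContinuousLinearMap.proj i : (Fin n → ℝ) →L[ℝ] ℝ).comp f') x :=
    fun f f' x i hf => (ContinuousLinearMap.proj i : (Fin n → ℝ) →L[ℝ] ℝ).hasFDerivAt.comp x hf
  -- Part 1
  have part1 : ∀ q ∈ W, ∀ k : Fin n,
      fderiv ℝ φ q (0, 0, Pi.single k 1) =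
        ((W1η q.2)ᵀ *ᵥ (z2 (q.1, ξhat q) - z1 q.2)) k := by
    intro q hq k
    have hq2 : q.2 ∈ U := hWU q hq
    have hgV : (q.1, ξhat q) ∈ V := hmemV q hq
    have hDξ : HasFDerivAt ξhat (fderiv ℝ ξhat q) q :=
      ((hξhat.contDiffAt (hWopen.mem_nhds hq)).differentiableAt
        (by simp)).hasFDerivAt
    set Dξ := fderiv ℝ ξhat q with hDξdef
    set P : Fin n → (Fin n → ℝ) →L[ℝ] ℝ := fun i => ContinuousLinearMap.proj i with hPdef
    set S := ContinuousLinearMap.snd ℝ (Fin n → ℝ) ((Fin n → ℝ) × (Fin n → ℝ)) with hSdef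
    set Fst := ContinuousLinearMap.fst ℝ (Fin n → ℝ) ((Fin n → ℝ) × (Fin n → ℝ)) with hFstdef
    have hG : HasFDerivAt (fun r : (Fin n → ℝ) × ((Fin n → ℝ) × (Fin n → ℝ)) => (r.1, ξhat r))
        (Fst.prod Dξ) q := HasFDerivAt.prodMk hasFDerivAt_fst hDξ
    have hz2g : HasFDerivAt (fun r : (Fin n → ℝ) × ((Fin n → ℝ) × (Fin n → ℝ)) =>
        z2 (r.1, ξhat r))
        ((jacCLM (Z2x (q.1, ξhat q)) (Z2ξ (q.1, ξhat q))).comp (Fst.prod Dξ)) q :=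
      (hdz2 _ hgV).comp q hG
    have hz1s : HasFDerivAt (fun r : (Fin n → ℝ) × ((Fin n → ℝ) × (Fin n → ℝ)) => z1 r.2)
        ((jacCLM (Z1y q.2) (Z1η q.2)).comp S) q := (hdz1 _ hq2).comp q hasFDerivAt_snd
    have hζ1s : HasFDerivAt (fun r : (Fin n → ℝ) × ((Fin n → ℝ) × (Fin n → ℝ)) => ζ1 r.2)
        ((jacCLM (W1y q.2) (W1η q.2)).comp S) q := (hdζ1 _ hq2).comp q hasFDerivAt_snd
    have hφeq : φ = fun r : (Fin n → ℝ) × ((Fin n → ℝ) × (Fin n → ℝ)) =>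
        ∑ i : Fin n, (z2 (r.1, ξhat r) i - z1 r.2 i) * ζ1 r.2 i := by
      funext r
      rw [hφdef r]
      simp [dotProduct]
    set Dd := ((jacCLM (Z2x (q.1, ξhat q)) (Z2ξ (q.1, ξhat q))).comp (Fst.prod Dξ)) -
        ((jacCLM (Z1y q.2) (Z1η q.2)).comp S) with hDddef
    set Dζ := (jacCLM (W1y q.2) (W1η q.2)).comp S with hDζdef
    have hφ' : HasFDerivAt φ
        (∑ i : Fin n, ((z2 (q.1, ξhat q) i - z1 q.2 i) • ((P i).comp Dζ) +
          ζ1 q.2 i • ((P i).comp Dd))) q := by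
      rw [hφeq]
      exact HasFDerivAt.fun_sum fun i _ =>
        (coeF _ _ _ i (hz2g.sub hz1s)).mul (coeF _ _ _ i hζ1s)
    rw [hφ'.fderiv]
    set v : (Fin n → ℝ) × ((Fin n → ℝ) × (Fin n → ℝ)) :=
      ((0 : Fin n → ℝ), (0 : Fin n → ℝ), Pi.single k (1:ℝ)) with hvdef
    set w := Dξ v with hwdef
    have hstep : ∀ i : Fin n,
        ((z2 (q.1, ξhat q) i - z1 q.2 i) • ((P i).comp Dζ) + ζ1 q.2 i • ((P i).comp Dd)) v =
        (z2 (q.1, ξhat q) i - z1 q.2 i) * (W1η q.2 *ᵥ Pi.single k 1) i +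
          ζ1 q.2 i * ((Z2ξ (q.1, ξhat q) *ᵥ w) i - (Z1η q.2 *ᵥ Pi.single k 1) i) := by
      intro i
      have hv1 : v.1 = (0 : Fin n → ℝ) := rfl
      have hv2 : v.2 = ((0 : Fin n → ℝ), Pi.single k (1:ℝ)) := rfl
      simp only [ContinuousLinearMap.add_apply, ContinuousLinearMap.smul_apply,
        ContinuousLinearMap.comp_apply, ContinuousLinearMap.sub_apply, hDζdef, hDddef, hPdef,
        hSdef, ContinuousLinearMap.prod_apply, ContinuousLinearMap.coe_snd', hv2, hv1,
        ContinuousLinearMap.coe_fst', jacCLM_apply, Matrix.mulVec_zero, zero_add,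
        ContinuousLinearMap.proj_apply, smul_eq_mul, ← hwdef]
      simp [hFstdef, hv1, Matrix.mulVec_zero, Pi.sub_apply]
    rw [ContinuousLinearMap.sum_apply, Finset.sum_congr rfl fun i _ => hstep i,
      Finset.sum_add_distrib]
    have h2 : ∑ i : Fin n, ζ1 q.2 i * ((Z2ξ (q.1, ξhat q) *ᵥ w) i - (Z1η q.2 *ᵥ Pi.single k 1) i)
        = ζ1 q.2 ⬝ᵥ (Z2ξ (q.1, ξhat q) *ᵥ w) - ζ1 q.2 ⬝ᵥ (Z1η q.2 *ᵥ Pi.single k 1) := by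
      simp [dotProduct, mul_sub, Finset.sum_sub_distrib]
    rw [h2]
    have h3 : ζ1 q.2 ⬝ᵥ (Z2ξ (q.1, ξhat q) *ᵥ w) = 0 := by
      rw [← hζeq q hq, Matrix.dotProduct_mulVec, ← Matrix.mulVec_transpose, hrel2 _ hgV]
      simp
    have h4 : ζ1 q.2 ⬝ᵥ (Z1η q.2 *ᵥ Pi.single k 1) = 0 := by
      rw [Matrix.dotProduct_mulVec, ← Matrix.mulVec_transpose, hrel1 _ hq2]
      simp
    rw [h3, h4]
    have h5 : ∑ i : Fin n, (z2 (q.1, ξhat q) i - z1 q.2 i) * (W1η q.2 *ᵥ Pi.single k 1) i =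
        ((W1η q.2)ᵀ *ᵥ (z2 (q.1, ξhat q) - z1 q.2)) k := by
      have he : ∑ i : Fin n, (z2 (q.1, ξhat q) i - z1 q.2 i) * (W1η q.2 *ᵥ Pi.single k 1) i =
          (z2 (q.1, ξhat q) - z1 q.2) ⬝ᵥ (W1η q.2 *ᵥ Pi.single k 1) := by
        simp [dotProduct]
      rw [he, Matrix.dotProduct_mulVec, ← Matrix.mulVec_transpose]
      simp
    rw [h5]
    ring
  refine ⟨part1, ?_⟩
  intro p hp k l
  have hpW : (xs p, p) ∈ W := hmemW p hp
  have hVs : (xs p, ξs p) ∈ V := hmemVs p hp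
  set r0 : (Fin n → ℝ) × ((Fin n → ℝ) × (Fin n → ℝ)) := (xs p, p) with hr0def
  have hgr0 : (r0.1, ξhat r0) = (xs p, ξs p) := by
    simp [hr0def, hξhs p hp]
  have hDξ : HasFDerivAt ξhat (fderiv ℝ ξhat r0) r0 :=
    ((hξhat.contDiffAt (hWopen.mem_nhds hpW)).differentiableAt
      (by simp)).hasFDerivAt
  set Dξ := fderiv ℝ ξhat r0 with hDξdef
  set P : Fin n → (Fin n → ℝ) →L[ℝ] ℝ := fun i => ContinuousLinearMap.proj i with hPdef
  set S := ContinuousLinearMap.snd ℝ (Fin n → ℝ) ((Fin n → ℝ) × (Fin n → ℝ)) with hSdef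
  set Fst := ContinuousLinearMap.fst ℝ (Fin n → ℝ) ((Fin n → ℝ) × (Fin n → ℝ)) with hFstdef
  have hG : HasFDerivAt (fun r : (Fin n → ℝ) × ((Fin n → ℝ) × (Fin n → ℝ)) => (r.1, ξhat r))
      (Fst.prod Dξ) r0 := HasFDerivAt.prodMk hasFDerivAt_fst hDξ
  have hζ2at : HasFDerivAt ζ2 (jacCLM (W2x (xs p, ξs p)) (W2ξ (xs p, ξs p))) (r0.1, ξhat r0) := by
    rw [hgr0]; exact hdζ2 _ hVs
  have hζ2g : HasFDerivAt (fun r : (Fin n → ℝ) × ((Fin n → ℝ) × (Fin n → ℝ)) =>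
      ζ2 (r.1, ξhat r))
      ((jacCLM (W2x (xs p, ξs p)) (W2ξ (xs p, ξs p))).comp (Fst.prod Dξ)) r0 :=
    hζ2at.comp r0 hG
  have hζ1s : HasFDerivAt (fun r : (Fin n → ℝ) × ((Fin n → ℝ) × (Fin n → ℝ)) => ζ1 r.2)
      ((jacCLM (W1y p) (W1η p)).comp S) r0 := (hdζ1 p hp).comp r0 hasFDerivAt_snd
  have hev : (fun r : (Fin n → ℝ) × ((Fin n → ℝ) × (Fin n → ℝ)) => ζ1 r.2) =ᶠ[nhds r0]
      (fun r => ζ2 (r.1, ξhat r)) :=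
    Filter.eventuallyEq_of_mem (hWopen.mem_nhds hpW) fun q hq => (hζeq q hq).symm
  have huniq : (jacCLM (W2x (xs p, ξs p)) (W2ξ (xs p, ξs p))).comp (Fst.prod Dξ) =
      (jacCLM (W1y p) (W1η p)).comp S :=
    (hζ2g.congr_of_eventuallyEq hev).unique hζ1s
  set vl : (Fin n → ℝ) × ((Fin n → ℝ) × (Fin n → ℝ)) :=
    ((0 : Fin n → ℝ), (0 : Fin n → ℝ), Pi.single l (1:ℝ)) with hvldef
  have happ : W2ξ (xs p, ξs p) *ᵥ (Dξ vl) = W1η p *ᵥ Pi.single l 1 := by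
    have h := DFunLike.congr_fun huniq vl
    have hv1 : vl.1 = (0 : Fin n → ℝ) := rfl
    have hv2 : vl.2 = ((0 : Fin n → ℝ), Pi.single l (1:ℝ)) := rfl
    simpa [ContinuousLinearMap.comp_apply, hSdef, hFstdef, ContinuousLinearMap.prod_apply,
      ContinuousLinearMap.coe_fst', ContinuousLinearMap.coe_snd', hv1, hv2,
      jacCLM_apply, Matrix.mulVec_zero] using h
  have hdet : IsUnit (W2ξ (xs p, ξs p)).det := (Matrix.isUnit_iff_isUnit_det _).mp (hinv p hp)
  have hDξval : Dξ vl = (W2ξ (xs p, ξs p))⁻¹ *ᵥ (W1η p *ᵥ Pi.single l 1) := by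
    rw [← happ, Matrix.mulVec_mulVec, Matrix.nonsing_inv_mul _ hdet, Matrix.one_mulVec]
  have hz2at : HasFDerivAt z2 (jacCLM (Z2x (xs p, ξs p)) (Z2ξ (xs p, ξs p))) (r0.1, ξhat r0) := by
    rw [hgr0]; exact hdz2 _ hVs
  have hz2g : HasFDerivAt (fun r : (Fin n → ℝ) × ((Fin n → ℝ) × (Fin n → ℝ)) =>
      z2 (r.1, ξhat r))
      ((jacCLM (Z2x (xs p, ξs p)) (Z2ξ (xs p, ξs p))).comp (Fst.prod Dξ)) r0 :=
    hz2at.comp r0 hG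
  have hz1s : HasFDerivAt (fun r : (Fin n → ℝ) × ((Fin n → ℝ) × (Fin n → ℝ)) => z1 r.2)
      ((jacCLM (Z1y p) (Z1η p)).comp S) r0 := (hdz1 p hp).comp r0 hasFDerivAt_snd
  set Dd := ((jacCLM (Z2x (xs p, ξs p)) (Z2ξ (xs p, ξs p))).comp (Fst.prod Dξ)) -
      ((jacCLM (Z1y p) (Z1η p)).comp S) with hDddef
  have hd : HasFDerivAt (fun r : (Fin n → ℝ) × ((Fin n → ℝ) × (Fin n → ℝ)) =>
      z2 (r.1, ξhat r) - z1 r.2) Dd r0 := hz2g.sub hz1s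
  -- the coefficient functions
  set c : Fin n → (Fin n → ℝ) × ((Fin n → ℝ) × (Fin n → ℝ)) → ℝ :=
    fun i r => (fderiv ℝ ζ1 r.2) ((0 : Fin n → ℝ), Pi.single k (1:ℝ)) i with hcdef
  set d : Fin n → (Fin n → ℝ) × ((Fin n → ℝ) × (Fin n → ℝ)) → ℝ :=
    fun i r => z2 (r.1, ξhat r) i - z1 r.2 i with hddef
  have hfdζ1 : ContDiffOn ℝ (⊤ : ℕ∞) (fderiv ℝ ζ1) U :=
    hζ1.fderiv_of_isOpen hUopen (by exact le_of_eq (by simp))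
  have hc2 : DifferentiableAt ℝ
      (fun r : (Fin n → ℝ) × ((Fin n → ℝ) × (Fin n → ℝ)) => fderiv ℝ ζ1 r.2) r0 :=
    ((hfdζ1.contDiffAt (hUopen.mem_nhds hp)).differentiableAt
      (by simp)).comp r0 differentiable_snd.differentiableAt
  have hci : ∀ i : Fin n, DifferentiableAt ℝ (c i) r0 := by
    intro i
    have h1 : DifferentiableAt ℝ
        (fun r : (Fin n → ℝ) × ((Fin n → ℝ) × (Fin n → ℝ)) =>
          (fderiv ℝ ζ1 r.2) ((0 : Fin n → ℝ), Pi.single k (1:ℝ))) r0 :=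
      (ContinuousLinearMap.apply ℝ (Fin n → ℝ)
        (((0 : Fin n → ℝ), Pi.single k (1:ℝ)) :
          (Fin n → ℝ) × (Fin n → ℝ))).differentiableAt.comp r0 hc2
    exact ((ContinuousLinearMap.proj i : (Fin n → ℝ) →L[ℝ] ℝ)).differentiableAt.comp r0 h1
  -- identify fderiv φ · (0,0,e_k) with an explicit function near r0
  have hFev : (fun r => fderiv ℝ φ r (0, 0, Pi.single k 1)) =ᶠ[nhds r0]
      (fun r => ∑ i : Fin n, d i r * c i r) := by
    apply Filter.eventuallyEq_of_mem (hWopen.mem_nhds hpW)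
    intro q hq
    have h1 := part1 q hq k
    have h2 : fderiv ℝ ζ1 q.2 = jacCLM (W1y q.2) (W1η q.2) := (hdζ1 _ (hWU q hq)).fderiv
    have hck : ∀ i : Fin n, c i q = (W1η q.2) i k := by
      intro i
      simp [hcdef, h2, jacCLM_apply, Matrix.mulVec_zero, Matrix.mulVec_single]
    simp only [h1, hddef, hck]
    simp [Matrix.mulVec, dotProduct, Matrix.transpose_apply, Pi.sub_apply, mul_comm]
  have hF' : HasFDerivAt (fun r => ∑ i : Fin n, d i r * c i r)
      (∑ i : Fin n, (d i r0 • (fderiv ℝ (c i) r0) + c i r0 • ((P i).comp Dd))) r0 :=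
    HasFDerivAt.fun_sum fun i _ => (coeF _ _ _ i hd).mul (hci i).hasFDerivAt
  rw [hFev.fderiv_eq, hF'.fderiv, ContinuousLinearMap.sum_apply]
  have hd0 : ∀ i : Fin n, d i r0 = 0 := by
    intro i
    simp [hddef, hr0def, hξhs p hp, hz12 p hp]
  have hck0 : ∀ i : Fin n, c i r0 = (W1η p) i k := by
    intro i
    have h2 : fderiv ℝ ζ1 p = jacCLM (W1y p) (W1η p) := (hdζ1 p hp).fderiv
    simp [hcdef, hr0def, h2, jacCLM_apply, Matrix.mulVec_zero, Matrix.mulVec_single]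
  have hDdval : ∀ i : Fin n, ((P i).comp Dd) vl =
      (Z2ξ (xs p, ξs p) * (W2ξ (xs p, ξs p))⁻¹ * W1η p - Z1η p) i l := by
    intro i
    have hv1 : vl.1 = (0 : Fin n → ℝ) := rfl
    have hv2 : vl.2 = ((0 : Fin n → ℝ), Pi.single l (1:ℝ)) := rfl
    have : Dd vl = Z2ξ (xs p, ξs p) *ᵥ (Dξ vl) - Z1η p *ᵥ Pi.single l 1 := by
      simp [hDddef, ContinuousLinearMap.comp_apply, hSdef, hFstdef,
        ContinuousLinearMap.prod_apply, ContinuousLinearMap.coe_fst',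
        ContinuousLinearMap.coe_snd', hv1, hv2, jacCLM_apply, Matrix.mulVec_zero]
    rw [ContinuousLinearMap.comp_apply, this, hDξval, Matrix.mulVec_mulVec,
      Matrix.mulVec_mulVec]
    simp [hPdef, Matrix.mulVec_single, Matrix.sub_apply]
  have hstep : ∀ i : Fin n,
      (d i r0 • (fderiv ℝ (c i) r0) + c i r0 • ((P i).comp Dd)) vl =
      (W1η p) i k * (Z2ξ (xs p, ξs p) * (W2ξ (xs p, ξs p))⁻¹ * W1η p - Z1η p) i l := by
    intro i
    rw [ContinuousLinearMap.add_apply, ContinuousLinearMap.smul_apply,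
      ContinuousLinearMap.smul_apply, hd0 i, hck0 i, hDdval i]
    simp
  rw [Finset.sum_congr rfl fun i _ => hstep i]
  simp [Matrix.mul_apply, Matrix.transpose_apply]
end

section
/- Let C ∈ ℂ^{n×n} be complex symmetric (Cᵀ = C) whose real part Re C = (C + C̄)/2 is positive semidefinite, let m = dim_ℂ ker C, and let Π be the orthogonal projection (with respect to the standard Hermitian inner product) of ℂⁿ onto ker C. Then ε^{−m} det(C + εI) → det(C + Π) as ε → 0⁺ along real ε > 0. -/
open Matrix


lemma conj_mem_ker (n : ℕ) (C : Matrix (Fin n) (Fin n) ℂ) (hC : Cᵀ = C)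
    (hRe : (C.map Complex.re).PosSemidef) (x : Fin n → ℂ) (hx : C *ᵥ x = 0) :
    C *ᵥ (star x) = 0 := by
  classical
  have hre : ∀ k, ((C.map Complex.re) *ᵥ (fun i => (x i).re)) k
      - ((C.map Complex.im) *ᵥ (fun i => (x i).im)) k = 0 := by
    intro k
    have h := congrArg Complex.re (congrFun hx k)
    simpa [Matrix.mulVec, dotProduct, Complex.re_sum, Complex.mul_re,
      Finset.sum_sub_distrib, Matrix.map_apply] using h
  have him : ∀ k, ((C.map Complex.re) *ᵥ (fun i => (x i).im)) k
      + ((C.map Complex.im) *ᵥ (fun i => (x i).re)) k = 0 := by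
    intro k
    have h := congrArg Complex.im (congrFun hx k)
    simpa [Matrix.mulVec, dotProduct, Complex.im_sum, Complex.mul_im,
      Finset.sum_add_distrib, Matrix.map_apply, add_comm] using h
  set A : Matrix (Fin n) (Fin n) ℝ := C.map Complex.re with hA
  set B : Matrix (Fin n) (Fin n) ℝ := C.map Complex.im with hB
  set u : Fin n → ℝ := fun i => (x i).re with hu
  set v : Fin n → ℝ := fun i => (x i).im with hv
  have h1 : A *ᵥ u = B *ᵥ v := funext fun k => by have := hre k; linarith
  have h2 : A *ᵥ v = -(B *ᵥ u) := funext fun k => by have := him k; simp; linarith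
  have hBsym : Bᵀ = B := by rw [hB, ← Matrix.transpose_map, hC]
  have hsum : u ⬝ᵥ (A *ᵥ u) + v ⬝ᵥ (A *ᵥ v) = 0 := by
    have hdot : u ⬝ᵥ (B *ᵥ v) = v ⬝ᵥ (B *ᵥ u) := by
      rw [Matrix.dotProduct_mulVec, ← Matrix.mulVec_transpose, hBsym, dotProduct_comm]
    rw [h1, h2, dotProduct_neg, hdot]
    ring
  have nn1 := hRe.dotProduct_mulVec_nonneg u
  have nn2 := hRe.dotProduct_mulVec_nonneg v
  simp only [star_trivial] at nn1 nn2
  have hAu : A *ᵥ u = 0 := by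
    refine (hRe.dotProduct_mulVec_zero_iff u).mp ?_
    simp only [star_trivial]
    linarith
  have hAv : A *ᵥ v = 0 := by
    refine (hRe.dotProduct_mulVec_zero_iff v).mp ?_
    simp only [star_trivial]
    linarith
  have hBv : B *ᵥ v = 0 := by rw [← h1, hAu]
  have hBu : B *ᵥ u = 0 := by
    have := h2; rw [hAv] at this; simpa [eq_comm, neg_eq_zero] using this
  funext k
  have e1 : ∑ j, (C k j).re * (x j).re = 0 := by
    simpa [Matrix.mulVec, dotProduct, Matrix.map_apply, hA, hu] using congrFun hAu k
  have e2 : ∑ j, (C k j).re * (x j).im = 0 := by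
    simpa [Matrix.mulVec, dotProduct, Matrix.map_apply, hA, hv] using congrFun hAv k
  have e3 : ∑ j, (C k j).im * (x j).im = 0 := by
    simpa [Matrix.mulVec, dotProduct, Matrix.map_apply, hB, hv] using congrFun hBv k
  have e4 : ∑ j, (C k j).im * (x j).re = 0 := by
    simpa [Matrix.mulVec, dotProduct, Matrix.map_apply, hB, hu] using congrFun hBu k
  show (C *ᵥ star x) k = (0 : Fin n → ℂ) k
  apply Complex.ext
  · simp [Matrix.mulVec, dotProduct, Complex.re_sum, Complex.mul_re,
      Finset.sum_add_distrib, e1, e3]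
  · simp [Matrix.mulVec, dotProduct, Complex.im_sum, Complex.mul_im,
      Finset.sum_add_distrib, Finset.sum_neg_distrib, e2, e4]


lemma det_aux (n : ℕ) (P : Matrix (Fin n) (Fin n) ℂ)
    (hP1 : P * P = P) (hP2 : P.IsHermitian) (a b : ℂ) :
    (a • P + b • (1 - P)).det = a ^ P.rank * b ^ (n - P.rank) := by
  classical
  set U : Matrix (Fin n) (Fin n) ℂ := (hP2.eigenvectorUnitary : Matrix (Fin n) (Fin n) ℂ) with hUdef
  set d : Fin n → ℝ := hP2.eigenvalues with hddef
  set Λ : Matrix (Fin n) (Fin n) ℂ := diagonal (RCLike.ofReal ∘ d) with hΛdef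
  have hspec : P = U * Λ * star U := hP2.spectral_theorem
  have hUU : U * star U = 1 := Matrix.mem_unitaryGroup_iff.mp hP2.eigenvectorUnitary.2
  have hUU' : star U * U = 1 := Matrix.mem_unitaryGroup_iff'.mp hP2.eigenvectorUnitary.2
  have hdiag : star U * P * U = Λ := by
    have h := hP2.conjStarAlgAut_star_eigenvectorUnitary
    rw [Unitary.conjStarAlgAut_apply, Unitary.coe_star, star_star] at h
    exact h
  have hΛ2 : Λ * Λ = Λ := by
    conv_lhs => rw [← hdiag]
    calc (star U * P * U) * (star U * P * U)
        = star U * (P * ((U * star U) * P)) * U := by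
          simp only [Matrix.mul_assoc]
      _ = star U * P * U := by rw [hUU, Matrix.one_mul, hP1, Matrix.mul_assoc]
      _ = Λ := hdiag
  have hd01 : ∀ i, d i = 0 ∨ d i = 1 := by
    intro i
    have h := congrFun (congrFun hΛ2 i) i
    rw [hΛdef, Matrix.diagonal_mul_diagonal] at h
    simp only [Matrix.diagonal_apply_eq, Function.comp_apply, Pi.mul_apply] at h
    have : (d i : ℂ) * (d i : ℂ) = (d i : ℂ) := h
    have h2 : (d i) * (d i) = d i := by exact_mod_cast this
    exact eq_zero_or_one_of_sq_eq_self (by rw [sq]; exact h2)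
  have key : a • P + b • (1 - P) = U * (a • Λ + b • (1 - Λ)) * star U := by
    rw [hspec]
    simp only [Matrix.mul_add, Matrix.add_mul, Matrix.mul_smul, Matrix.smul_mul,
      Matrix.mul_sub, Matrix.sub_mul, Matrix.mul_one, Matrix.one_mul, hUU]
  rw [key, Matrix.det_mul, Matrix.det_mul]
  have hdetU : U.det * (star U).det = 1 := by
    rw [← Matrix.det_mul, hUU, Matrix.det_one]
  have hcomb : a • Λ + b • (1 - Λ)
      = diagonal (fun i => a * ((d i : ℝ) : ℂ) + b * (1 - ((d i : ℝ) : ℂ))) := by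
    rw [hΛdef]
    ext i j
    rcases eq_or_ne i j with rfl | hij
    · simp [Matrix.diagonal_apply_eq, Matrix.one_apply_eq]
    · simp [Matrix.diagonal_apply_ne _ hij, Matrix.one_apply_ne hij]
  have hprod : (a • Λ + b • (1 - Λ)).det
      = ∏ i, (if d i ≠ 0 then a else b) := by
    rw [hcomb, Matrix.det_diagonal]
    refine Finset.prod_congr rfl fun i _ => ?_
    rcases hd01 i with h | h <;> simp [h]
  have hcard : P.rank = (Finset.univ.filter (fun i => d i ≠ 0)).card := by
    rw [hP2.rank_eq_card_non_zero_eigs, Fintype.card_subtype]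
  have hcard2 : n - P.rank = (Finset.univ.filter (fun i => ¬ d i ≠ 0)).card := by
    have := Finset.card_filter_add_card_filter_not
      (s := (Finset.univ : Finset (Fin n))) (p := fun i => d i ≠ 0)
    rw [hcard]
    simp only [Finset.card_univ, Fintype.card_fin] at this
    omega
  rw [hprod, Finset.prod_ite, Finset.prod_const, Finset.prod_const, ← hcard, ← hcard2]
  rw [mul_comm (U.det), mul_assoc, hdetU, mul_one]

/-- For a complex symmetric matrix `C` with positive semidefinite real part,
`m = dim ker C`, and `P` the orthogonal projection of `ℂⁿ` onto `ker C` (characterized by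
being a Hermitian idempotent with range `ker C`), one has
`ε^{−m} det(C + εI) → det(C + P)` as `ε → 0⁺`. -/
theorem det_plus_limit (n : ℕ) (C : Matrix (Fin n) (Fin n) ℂ) (hC : Cᵀ = C)
    (hRe : (C.map Complex.re).PosSemidef)
    (P : Matrix (Fin n) (Fin n) ℂ)
    (hP1 : P * P = P) (hP2 : P.IsHermitian)
    (hP3 : ∀ v : Fin n → ℂ, C.mulVec (P.mulVec v) = 0)
    (hP4 : ∀ v : Fin n → ℂ, C.mulVec v = 0 → P.mulVec v = v) :
    Filter.Tendsto
      (fun ε : ℝ =>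
        ((ε : ℂ) ^ (Module.finrank ℂ (LinearMap.ker C.mulVecLin)))⁻¹ *
          (C + (ε : ℂ) • 1).det)
      (nhdsWithin 0 (Set.Ioi 0)) (nhds (C + P).det) := by
  classical
  set m := Module.finrank ℂ (LinearMap.ker C.mulVecLin) with hm
  -- C * P = 0
  have hCP : C * P = 0 := by
    ext i j
    have h := hP3 (Pi.single j 1)
    rw [Matrix.mulVec_mulVec] at h
    have h2 := congrFun h i
    simpa [Matrix.mulVec_single] using h2
  -- P * C = 0
  have hsym : ∀ a b, C a b = C b a := by
    intro a b
    conv_lhs => rw [← hC]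
    exact Matrix.transpose_apply C a b
  have hPC : P * C = 0 := by
    have h1 : Cᴴ * P = 0 := by
      ext i j
      have hw : C *ᵥ (fun k => P k j) = 0 := by
        have h := hP3 (Pi.single j 1)
        have hcol : P *ᵥ Pi.single j 1 = fun k => P k j := by
          funext k; simp [Matrix.mulVec_single]
        rwa [hcol] at h
      have hstar := conj_mem_ker n C hC hRe _ hw
      have h0 : ((C *ᵥ star fun k => P k j) i) = 0 := by rw [hstar]; rfl
      calc (Cᴴ * P) i j = ∑ k, star (C k i) * P k j := by
            simp [Matrix.mul_apply, Matrix.conjTranspose_apply]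
        _ = star ((C *ᵥ star fun k => P k j) i) := by
            simp only [Matrix.mulVec, dotProduct, star_sum, star_mul', star_star,
              Pi.star_apply]
            refine Finset.sum_congr rfl fun k _ => ?_
            rw [hsym i k, mul_comm]
        _ = 0 := by rw [h0, star_zero]
    calc P * C = (Cᴴ * P)ᴴ := by
          rw [Matrix.conjTranspose_mul, Matrix.conjTranspose_conjTranspose, hP2.eq]
      _ = 0 := by rw [h1, Matrix.conjTranspose_zero]
  set D := C + P with hD
  have hDP : D * P = P := by rw [hD, Matrix.add_mul, hCP, hP1, zero_add]
  have hPD : P * D = P := by rw [hD, Matrix.mul_add, hPC, hP1, zero_add]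
  have hdet : IsUnit D.det := by
    rw [isUnit_iff_ne_zero]
    intro h
    obtain ⟨v, hv, hv0⟩ := Matrix.exists_mulVec_eq_zero_iff.mpr h
    have hPv : P *ᵥ v = 0 := by
      calc P *ᵥ v = (P * D) *ᵥ v := by rw [hPD]
        _ = P *ᵥ (D *ᵥ v) := (Matrix.mulVec_mulVec _ _ _).symm
        _ = 0 := by rw [hv0, Matrix.mulVec_zero]
    have hCv : C *ᵥ v = 0 := by
      have h1 : D *ᵥ v = C *ᵥ v + P *ᵥ v := Matrix.add_mulVec _ _ _
      rw [hv0, hPv, add_zero] at h1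
      exact h1.symm
    exact hv (by rw [← hP4 v hCv, hPv])
  have hDD : D * D⁻¹ = 1 := Matrix.mul_nonsing_inv D hdet
  have hDiP : D⁻¹ * P = P := by
    calc D⁻¹ * P = D⁻¹ * (D * P) := by rw [hDP]
      _ = (D⁻¹ * D) * P := by rw [Matrix.mul_assoc]
      _ = P := by rw [Matrix.nonsing_inv_mul D hdet, Matrix.one_mul]
  -- rank P = m
  have hrange : LinearMap.range P.mulVecLin = LinearMap.ker C.mulVecLin := by
    ext x
    simp only [LinearMap.mem_range, LinearMap.mem_ker, Matrix.mulVecLin_apply]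
    constructor
    · rintro ⟨y, rfl⟩; exact hP3 y
    · intro h; exact ⟨x, hP4 x h⟩
  have hrank : P.rank = m := by rw [Matrix.rank, hrange, hm]
  -- the key factorizations
  have key : ∀ ε : ℝ, ε ∈ Set.Ioi (0:ℝ) →
      D.det * (1 + (ε:ℂ) • D⁻¹).det
          * ((1 + (ε:ℂ)) ^ (n - m) * (((1 + (ε:ℂ)) ^ n)⁻¹))
        = ((ε : ℂ) ^ m)⁻¹ * (C + (ε : ℂ) • 1).det := by
    intro ε hε
    rw [Set.mem_Ioi] at hε
    have he0 : (ε:ℂ) ≠ 0 := by exact_mod_cast hε.ne'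
    have he1 : (1 + (ε:ℂ)) ≠ 0 := by
      intro h
      have := congrArg Complex.re h
      simp [Complex.add_re] at this
      linarith
    set e : ℂ := (ε : ℂ) with he
    have f1 : C + e • (1 : Matrix (Fin n) (Fin n) ℂ) = D * ((1 - P) + e • D⁻¹) := by
      rw [Matrix.mul_add, Matrix.mul_sub, Matrix.mul_one, hDP, Matrix.mul_smul, hDD, hD]
      abel
    have f2 : (1 + e) • ((1 - P) + e • D⁻¹)
        = (1 + e • D⁻¹) * (e • P + (1 + e) • (1 - P)) := by
      rw [Matrix.add_mul, Matrix.one_mul, Matrix.mul_add, Matrix.mul_smul, Matrix.mul_smul,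
        Matrix.smul_mul, Matrix.smul_mul, hDiP, Matrix.mul_sub, Matrix.mul_one, hDiP]
      rw [smul_smul, smul_smul, smul_sub]
      module
    have d1 : (C + e • (1 : Matrix (Fin n) (Fin n) ℂ)).det
        = D.det * ((1 - P) + e • D⁻¹).det := by rw [f1, Matrix.det_mul]
    have d2 : (1 + e) ^ n * ((1 - P) + e • D⁻¹).det
        = (1 + e • D⁻¹).det * (e ^ m * (1 + e) ^ (n - m)) := by
      have := congrArg Matrix.det f2
      rw [Matrix.det_smul, Matrix.det_mul, det_aux n P hP1 hP2 e (1 + e), hrank,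
        Fintype.card_fin] at this
      exact this
    rw [d1]
    have hXne : ((1 + e) ^ n) ≠ 0 := pow_ne_zero _ he1
    have hem : (e ^ m) ≠ 0 := pow_ne_zero _ he0
    field_simp
    linear_combination (-D.det) * d2
  have hcont : ContinuousAt (fun ε : ℝ => D.det * (1 + (ε:ℂ) • D⁻¹).det
      * ((1 + (ε:ℂ)) ^ (n - m) * (((1 + (ε:ℂ)) ^ n)⁻¹))) 0 := by
    have c1 : Continuous fun ε : ℝ => (1 + (ε:ℂ) • D⁻¹ : Matrix (Fin n) (Fin n) ℂ).det :=
      (continuous_const.add ((Complex.continuous_ofReal).smul continuous_const)).matrix_det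
    have c2 : Continuous fun ε : ℝ => (1 + (ε:ℂ)) ^ (n - m) :=
      (continuous_const.add Complex.continuous_ofReal).pow _
    have c3 : ContinuousAt (fun ε : ℝ => (((1 + (ε:ℂ)) ^ n)⁻¹)) 0 := by
      apply ContinuousAt.inv₀
      · exact ((continuous_const.add Complex.continuous_ofReal).pow n).continuousAt
      · norm_num
    exact (continuous_const.mul c1).continuousAt.mul (c2.continuousAt.mul c3)
  have hg : Filter.Tendsto (fun ε : ℝ => D.det * (1 + (ε:ℂ) • D⁻¹).det
      * ((1 + (ε:ℂ)) ^ (n - m) * (((1 + (ε:ℂ)) ^ n)⁻¹))) (nhdsWithin 0 (Set.Ioi 0))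
      (nhds ((C + P).det)) := by
    have h := hcont.tendsto.mono_left (nhdsWithin_le_nhds (s := Set.Ioi (0:ℝ)))
    simpa using h
  exact Filter.Tendsto.congr' (eventually_nhdsWithin_of_forall key) hg
end

section
/- Let x⁰ ∈ ℝⁿ, let ξ⁰ ∈ ℝⁿ with ξ⁰ ≠ 0, and let A ∈ ℝ^{n×n} be symmetric. Then there exists a smooth map f : ℝⁿ → ℝⁿ and a neighbourhood of x⁰ on which f is a diffeomorphism onto its image, with f(x⁰) = x⁰ and Df(x⁰) = I, such that the cotangent lift F(x,ξ) = (f(x), (Df(x)ᵀ)⁻¹ξ) satisfies DF(x⁰,ξ⁰)(𝐱, A𝐱) = (𝐱, 0) for every 𝐱 ∈ ℝⁿ. In other words, the differential of F at (x⁰,ξ⁰) maps the Lagrangian subspace {(𝐱, A𝐱) : 𝐱 ∈ ℝⁿ} onto the horizontal subspace {(𝐱, 0) : 𝐱 ∈ ℝⁿ}. -/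
open Matrix

/-- The Jacobian matrix of a map `f : ℝⁿ → ℝⁿ` at a point. -/
noncomputable def jacMat {n : ℕ} (f : (Fin n → ℝ) → Fin n → ℝ) (x : Fin n → ℝ) :
    Matrix (Fin n) (Fin n) ℝ :=
  Matrix.of fun i j => fderiv ℝ f x (Pi.single j 1) i

set_option maxHeartbeats 1000000

namespace FlattenAux

variable {n : ℕ}

/-- dot product as a continuous bilinear map -/
noncomputable def dpCLM (n : ℕ) : (Fin n → ℝ) →L[ℝ] (Fin n → ℝ) →L[ℝ] ℝ :=
  LinearMap.toContinuousLinearMap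
  { toFun := fun v => LinearMap.toContinuousLinearMap
      { toFun := fun w => v ⬝ᵥ w
        map_add' := fun a b => by simp [dotProduct_add]
        map_smul' := fun r a => by simp [dotProduct_smul] }
    map_add' := fun a b => by ext w; simp [add_dotProduct]
    map_smul' := fun r a => by ext w; simp [smul_dotProduct] }

@[simp] lemma dpCLM_apply (v w : Fin n → ℝ) : dpCLM n v w = v ⬝ᵥ w := rfl

/-- mulVec as a continuous linear map -/
noncomputable def mACLM (A : Matrix (Fin n) (Fin n) ℝ) : (Fin n → ℝ) →L[ℝ] (Fin n → ℝ) :=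
  LinearMap.toContinuousLinearMap A.mulVecLin

@[simp] lemma mACLM_apply (A : Matrix (Fin n) (Fin n) ℝ) (v : Fin n → ℝ) :
    mACLM A v = A *ᵥ v := rfl

lemma vecMulVec_mul_vecMulVec (u c v w : Fin n → ℝ) :
    vecMulVec u c * vecMulVec v w = (c ⬝ᵥ v) • vecMulVec u w := by
  ext i j
  simp only [Matrix.mul_apply, vecMulVec_apply, Matrix.smul_apply, smul_eq_mul, dotProduct,
    Finset.sum_mul]
  exact Finset.sum_congr rfl fun k _ => by ring

lemma vecMulVec_mulVec' (u c ξ : Fin n → ℝ) :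
    vecMulVec u c *ᵥ ξ = (c ⬝ᵥ ξ) • u := by
  ext i
  simp only [Matrix.mulVec, vecMulVec_apply, dotProduct, Pi.smul_apply, smul_eq_mul,
    Finset.sum_mul]
  exact Finset.sum_congr rfl fun k _ => by ring

lemma sherman (u c : Fin n → ℝ) (h : (1:ℝ) + c ⬝ᵥ u ≠ 0) :
    ((1 : Matrix (Fin n) (Fin n) ℝ) + vecMulVec u c)⁻¹
      = 1 - ((1:ℝ) + c ⬝ᵥ u)⁻¹ • vecMulVec u c := by
  apply Matrix.inv_eq_right_inv
  set t : ℝ := c ⬝ᵥ u with ht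
  have hMM : vecMulVec u c * vecMulVec u c = t • vecMulVec u c := vecMulVec_mul_vecMulVec u c u c
  rw [mul_sub, mul_one, add_mul, one_mul, mul_smul_comm, hMM, smul_smul]
  have hcoef : ((1:ℝ)+t)⁻¹ • vecMulVec u c + ((1+t)⁻¹ * t) • vecMulVec u c = vecMulVec u c := by
    rw [← add_smul]
    have : ((1:ℝ)+t)⁻¹ + (1+t)⁻¹ * t = 1 := by field_simp
    rw [this, one_smul]
  rw [hcoef]
  simp

variable (A : Matrix (Fin n) (Fin n) ℝ) (x0 c : Fin n → ℝ)

noncomputable def uu (x : Fin n → ℝ) : Fin n → ℝ := A *ᵥ (x - x0)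

noncomputable def phi (x : Fin n → ℝ) : ℝ := 2⁻¹ * ((A *ᵥ (x - x0)) ⬝ᵥ (x - x0))

noncomputable def ff (x : Fin n → ℝ) : Fin n → ℝ := x + phi A x0 x • c

@[simp] lemma uu_x0 : uu A x0 x0 = 0 := by simp [uu]

@[simp] lemma ff_x0 : ff A x0 c x0 = x0 := by simp [ff, phi]

lemma hmx (x : Fin n → ℝ) :
    HasFDerivAt (fun y : Fin n → ℝ => (mACLM A (y - x0), y - x0))
      ((mACLM A).prod (ContinuousLinearMap.id ℝ (Fin n → ℝ))) x := by
  have h1 : HasFDerivAt (fun y : Fin n → ℝ => y - x0)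
      (ContinuousLinearMap.id ℝ (Fin n → ℝ)) x := (hasFDerivAt_id x).sub_const x0
  have h2 : HasFDerivAt (fun y : Fin n → ℝ => mACLM A (y - x0)) (mACLM A) x := by
    have := ((mACLM A).hasFDerivAt (x := x - x0)).comp x h1
    simpa using this
  exact HasFDerivAt.prodMk h2 h1

lemma phi_hasFDerivAt (hA : A.IsSymm) (x : Fin n → ℝ) :
    HasFDerivAt (phi A x0) (dpCLM n (uu A x0 x)) x := by
  have hb : IsBoundedBilinearMap ℝ (fun p : (Fin n → ℝ) × (Fin n → ℝ) => dpCLM n p.1 p.2) :=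
    (dpCLM n).isBoundedBilinearMap
  have hcomp : HasFDerivAt (fun y : Fin n → ℝ => dpCLM n (mACLM A (y - x0)) (y - x0))
      ((hb.deriv (mACLM A (x - x0), x - x0)).comp
        ((mACLM A).prod (ContinuousLinearMap.id ℝ (Fin n → ℝ)))) x :=
    by have := (hb.hasFDerivAt (mACLM A (x - x0), x - x0)).comp x (hmx A x0 x); exact this
  have hmul := hcomp.const_mul (2⁻¹ : ℝ)
  have heq : (2⁻¹ : ℝ) • ((hb.deriv (mACLM A (x - x0), x - x0)).comp
      ((mACLM A).prod (ContinuousLinearMap.id ℝ (Fin n → ℝ)))) = dpCLM n (uu A x0 x) := by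
    ext h
    simp only [ContinuousLinearMap.smul_apply, ContinuousLinearMap.comp_apply,
      ContinuousLinearMap.prod_apply, ContinuousLinearMap.coe_id', id_eq,
      IsBoundedBilinearMap.deriv_apply, dpCLM_apply, mACLM_apply, smul_eq_mul, uu]
    have hsym : (A *ᵥ h) ⬝ᵥ (x - x0) = (A *ᵥ (x - x0)) ⬝ᵥ h := by
      rw [dotProduct_comm, Matrix.dotProduct_mulVec, ← Matrix.mulVec_transpose, hA.eq]
    rw [hsym]; ring
  rw [heq] at hmul
  exact hmul.congr_of_eventuallyEq (by filter_upwards with y; simp [phi, mul_comm])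

lemma ff_hasFDerivAt (hA : A.IsSymm) (x : Fin n → ℝ) :
    HasFDerivAt (ff A x0 c)
      (ContinuousLinearMap.id ℝ (Fin n → ℝ) + (dpCLM n (uu A x0 x)).smulRight c) x := by
  have h3 : HasFDerivAt (fun y : Fin n → ℝ => phi A x0 y • c)
      ((dpCLM n (uu A x0 x)).smulRight c) x := by
    exact (phi_hasFDerivAt A x0 hA x).smul_const c
  exact (hasFDerivAt_id x).add h3

lemma ff_contDiff : ContDiff ℝ (⊤ : ℕ∞) (ff A x0 c) := by
  have hb : IsBoundedBilinearMap ℝ (fun p : (Fin n → ℝ) × (Fin n → ℝ) => dpCLM n p.1 p.2) :=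
    (dpCLM n).isBoundedBilinearMap
  have hsub : ContDiff ℝ (⊤ : ℕ∞) (fun y : Fin n → ℝ => y - x0) :=
    contDiff_id.sub contDiff_const
  have hφs : ContDiff ℝ (⊤ : ℕ∞) (phi A x0) := by
    have hm : ContDiff ℝ (⊤ : ℕ∞) (fun y : Fin n → ℝ => (mACLM A (y - x0), y - x0)) :=
      ContDiff.prodMk (((mACLM A).contDiff).comp hsub) hsub
    have h2 : ContDiff ℝ (⊤ : ℕ∞)
        (fun y : Fin n → ℝ => dpCLM n (mACLM A (y - x0)) (y - x0)) := hb.contDiff.comp hm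
    unfold phi
    exact contDiff_const.mul h2
  exact contDiff_id.add (hφs.smul contDiff_const)

lemma ff_jac (hA : A.IsSymm) (x : Fin n → ℝ) :
    jacMat (ff A x0 c) x = 1 + vecMulVec c (uu A x0 x) := by
  ext i j
  have hfderiv : fderiv ℝ (ff A x0 c) x
      = ContinuousLinearMap.id ℝ (Fin n → ℝ) + (dpCLM n (uu A x0 x)).smulRight c :=
    (ff_hasFDerivAt A x0 c hA x).fderiv
  simp only [jacMat, Matrix.of_apply, hfderiv, ContinuousLinearMap.add_apply,
    ContinuousLinearMap.coe_id', id_eq, ContinuousLinearMap.smulRight_apply, dpCLM_apply,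
    Pi.add_apply, Pi.smul_apply, smul_eq_mul, Matrix.add_apply, Matrix.one_apply,
    vecMulVec_apply, dotProduct_single, mul_one, Pi.single_apply]
  rcases eq_or_ne i j with h | h <;> simp [h, eq_comm] <;> ring

lemma ff_jacT (hA : A.IsSymm) (x : Fin n → ℝ) :
    (jacMat (ff A x0 c) x)ᵀ = 1 + vecMulVec (uu A x0 x) c := by
  rw [ff_jac A x0 c hA x]
  ext i j
  simp [Matrix.transpose_apply, Matrix.one_apply, vecMulVec_apply, eq_comm, mul_comm]

end FlattenAux

namespace FlattenAux

variable {n : ℕ}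

lemma MN_aux (u c h : Fin n → ℝ) (hx : (1:ℝ) + c ⬝ᵥ u ≠ 0) :
    (h - (((1 + c ⬝ᵥ u)⁻¹) * (u ⬝ᵥ h)) • c)
      + (u ⬝ᵥ (h - (((1 + c ⬝ᵥ u)⁻¹) * (u ⬝ᵥ h)) • c)) • c = h := by
  have hcomm : u ⬝ᵥ c = c ⬝ᵥ u := dotProduct_comm u c
  rw [dotProduct_sub, dotProduct_smul, hcomm]
  match_scalars
  · ring
  · field_simp
    have hinv : (1 + c ⬝ᵥ u)⁻¹ * (1 + c ⬝ᵥ u) = 1 := inv_mul_cancel₀ hx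
    linear_combination (-((u ⬝ᵥ h) * (c ⬝ᵥ u))) * hinv

lemma NM_aux (u c h : Fin n → ℝ) (hx : (1:ℝ) + c ⬝ᵥ u ≠ 0) :
    (h + (u ⬝ᵥ h) • c)
      - (((1 + c ⬝ᵥ u)⁻¹) * (u ⬝ᵥ (h + (u ⬝ᵥ h) • c))) • c = h := by
  have hcomm : u ⬝ᵥ c = c ⬝ᵥ u := dotProduct_comm u c
  rw [dotProduct_add, dotProduct_smul, hcomm]
  match_scalars
  · ring
  · field_simp
    ring

variable (A : Matrix (Fin n) (Fin n) ℝ) (x0 c : Fin n → ℝ)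

/-- the derivative of `ff` as a continuous linear equivalence -/
noncomputable def ffEquiv (x : Fin n → ℝ) (hx : (1:ℝ) + c ⬝ᵥ uu A x0 x ≠ 0) :
    (Fin n → ℝ) ≃L[ℝ] (Fin n → ℝ) :=
  LinearEquiv.toContinuousLinearEquiv <|
    LinearEquiv.ofLinear
      (ContinuousLinearMap.id ℝ (Fin n → ℝ) + (dpCLM n (uu A x0 x)).smulRight c).toLinearMap
      (ContinuousLinearMap.id ℝ (Fin n → ℝ)
        - ((((1:ℝ) + c ⬝ᵥ uu A x0 x)⁻¹) • dpCLM n (uu A x0 x)).smulRight c).toLinearMap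
      (by
        refine LinearMap.ext fun h => ?_
        simp only [LinearMap.coe_comp, ContinuousLinearMap.coe_coe, Function.comp_apply,
          LinearMap.id_coe, id_eq, ContinuousLinearMap.add_apply, ContinuousLinearMap.coe_id',
          ContinuousLinearMap.sub_apply, ContinuousLinearMap.smulRight_apply,
          ContinuousLinearMap.smul_apply, dpCLM_apply, smul_eq_mul]
        exact MN_aux (uu A x0 x) c h hx)
      (by
        refine LinearMap.ext fun h => ?_
        simp only [LinearMap.coe_comp, ContinuousLinearMap.coe_coe, Function.comp_apply,
          LinearMap.id_coe, id_eq, ContinuousLinearMap.add_apply, ContinuousLinearMap.coe_id',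
          ContinuousLinearMap.sub_apply, ContinuousLinearMap.smulRight_apply,
          ContinuousLinearMap.smul_apply, dpCLM_apply, smul_eq_mul]
        exact NM_aux (uu A x0 x) c h hx)

lemma ffEquiv_coe (x : Fin n → ℝ) (hx : (1:ℝ) + c ⬝ᵥ uu A x0 x ≠ 0) :
    (ffEquiv A x0 c x hx : (Fin n → ℝ) →L[ℝ] (Fin n → ℝ))
      = ContinuousLinearMap.id ℝ (Fin n → ℝ) + (dpCLM n (uu A x0 x)).smulRight c := by
  ext h; rfl

end FlattenAux


open FlattenAux

/-- For `ξ⁰ ≠ 0` and `A` symmetric there is a smooth map `f`, a local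
diffeomorphism near `x⁰` with `f(x⁰) = x⁰` and `Df(x⁰) = I`, whose cotangent lift
`F(x,ξ) = (f(x), (Df(x)ᵀ)⁻¹ξ)` satisfies `DF(x⁰,ξ⁰)(𝐱, A𝐱) = (𝐱, 0)` for every `𝐱`,
i.e. `DF(x⁰,ξ⁰)` maps the Lagrangian subspace `{(𝐱, A𝐱)}` onto the horizontal subspace
`{(𝐱, 0)}`. -/
theorem exists_coordinates_flattening_lagrangian (n : ℕ) (x0 ξ0 : Fin n → ℝ)
    (hξ0 : ξ0 ≠ 0) (A : Matrix (Fin n) (Fin n) ℝ) (hA : A.IsSymm) :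
    ∃ (f : (Fin n → ℝ) → Fin n → ℝ) (s : Set (Fin n → ℝ)) (g : (Fin n → ℝ) → Fin n → ℝ),
      ContDiff ℝ (⊤ : ℕ∞) f ∧
      IsOpen s ∧ x0 ∈ s ∧
      ContDiffOn ℝ (⊤ : ℕ∞) g (f '' s) ∧ (∀ x ∈ s, g (f x) = x) ∧
      f x0 = x0 ∧
      fderiv ℝ f x0 = ContinuousLinearMap.id ℝ (Fin n → ℝ) ∧
      (∀ X : Fin n → ℝ,
        fderiv ℝ
            (fun p : (Fin n → ℝ) × (Fin n → ℝ) =>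
              ((f p.1, ((jacMat f p.1)ᵀ)⁻¹ *ᵥ p.2) : (Fin n → ℝ) × (Fin n → ℝ)))
            (x0, ξ0) (X, A *ᵥ X) = (X, 0)) := by
  classical
  have hd : ξ0 ⬝ᵥ ξ0 ≠ 0 := fun h => hξ0 (dotProduct_self_eq_zero.mp h)
  set c : Fin n → ℝ := (ξ0 ⬝ᵥ ξ0)⁻¹ • ξ0 with hc_def
  have hcξ : c ⬝ᵥ ξ0 = 1 := by
    rw [hc_def, smul_dotProduct, smul_eq_mul, inv_mul_cancel₀ hd]
  -- the candidate map
  set f := ff A x0 c with hf_def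
  have hfC : ContDiff ℝ (⊤ : ℕ∞) f := ff_contDiff A x0 c
  -- derivative of f at x0 is the identity
  have hdp0 : dpCLM n (uu A x0 x0) = 0 := by rw [uu_x0]; exact map_zero _
  have hD0 : (ContinuousLinearMap.id ℝ (Fin n → ℝ) + (dpCLM n (uu A x0 x0)).smulRight c)
      = ContinuousLinearMap.id ℝ (Fin n → ℝ) := by
    rw [hdp0]; ext h; simp
  have hf0' : HasFDerivAt f
      (((ContinuousLinearEquiv.refl ℝ (Fin n → ℝ)) : (Fin n → ℝ) ≃L[ℝ] (Fin n → ℝ))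
        : (Fin n → ℝ) →L[ℝ] (Fin n → ℝ)) x0 := by
    have := ff_hasFDerivAt A x0 c hA x0
    rw [hD0] at this
    simpa using this
  have hfderiv0 : fderiv ℝ f x0 = ContinuousLinearMap.id ℝ (Fin n → ℝ) := by
    have := (ff_hasFDerivAt A x0 c hA x0).fderiv
    rw [hD0] at this
    exact this
  -- the partial homeomorphism from the inverse function theorem
  set e := ContDiffAt.toOpenPartialHomeomorph f (hfC.contDiffAt (x := x0)) hf0' (by simp) with he_def
  have he_coe : (e : (Fin n → ℝ) → (Fin n → ℝ)) = f := rfl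
  have hx0e : x0 ∈ e.source :=
    ContDiffAt.mem_toOpenPartialHomeomorph_source (hfC.contDiffAt (x := x0)) (f := f) hf0' (by simp)
  -- the good open set
  have htcont : Continuous fun x : Fin n → ℝ => (1:ℝ) + c ⬝ᵥ uu A x0 x := by
    exact continuous_const.add ((dpCLM n c).continuous.comp
      ((mACLM A).continuous.comp (continuous_id.sub continuous_const)))
  set T : Set (Fin n → ℝ) := {x | (1:ℝ) + c ⬝ᵥ uu A x0 x ≠ 0} with hT_def
  have hTopen : IsOpen T := isOpen_compl_singleton.preimage htcont
  have hx0T : x0 ∈ T := by simp [hT_def]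
  set s := e.source ∩ T with hs_def
  have hsopen : IsOpen s := e.open_source.inter hTopen
  have hx0s : x0 ∈ s := ⟨hx0e, hx0T⟩
  refine ⟨f, s, e.symm, hfC, hsopen, hx0s, ?_, ?_, by simp [hf_def], hfderiv0, ?_⟩
  · -- smoothness of the inverse
    rintro _ ⟨x, hx, rfl⟩
    have hxe : x ∈ e.source := hx.1
    have hxT : (1:ℝ) + c ⬝ᵥ uu A x0 x ≠ 0 := hx.2
    have hsymm : e.symm (f x) = x := e.left_inv hxe
    have htarget : f x ∈ e.target := e.map_source hxe
    have hfd' : HasFDerivAt f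
        ((ffEquiv A x0 c x hxT : (Fin n → ℝ) →L[ℝ] (Fin n → ℝ))) (e.symm (f x)) := by
      rw [hsymm, ffEquiv_coe]
      exact ff_hasFDerivAt A x0 c hA x
    have hcd : ContDiffAt ℝ (⊤ : ℕ∞) f (e.symm (f x)) := hfC.contDiffAt
    exact (e.contDiffAt_symm htarget hfd' hcd).contDiffWithinAt
  · -- left inverse
    intro x hx
    exact e.left_inv hx.1
  · -- the derivative of the cotangent lift
    intro X
    set P : (Fin n → ℝ) × (Fin n → ℝ) → (Fin n → ℝ) × (Fin n → ℝ) :=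
      fun p => (f p.1,
        p.2 - (((1:ℝ) + c ⬝ᵥ uu A x0 p.1)⁻¹ * (c ⬝ᵥ p.2)) • uu A x0 p.1) with hP_def
    -- eventual equality
    have hW : {p : (Fin n → ℝ) × (Fin n → ℝ) | (1:ℝ) + c ⬝ᵥ uu A x0 p.1 ≠ 0} ∈
        nhds ((x0, ξ0) : (Fin n → ℝ) × (Fin n → ℝ)) := by
      refine IsOpen.mem_nhds ?_ (by simp)
      exact isOpen_compl_singleton.preimage (htcont.comp continuous_fst)
    have heq : (fun p : (Fin n → ℝ) × (Fin n → ℝ) =>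
        ((f p.1, ((jacMat f p.1)ᵀ)⁻¹ *ᵥ p.2) : (Fin n → ℝ) × (Fin n → ℝ)))
        =ᶠ[nhds ((x0, ξ0) : (Fin n → ℝ) × (Fin n → ℝ))] P := by
      filter_upwards [hW] with p hp
      have hinv : ((jacMat f p.1)ᵀ)⁻¹
          = 1 - ((1:ℝ) + c ⬝ᵥ uu A x0 p.1)⁻¹ • vecMulVec (uu A x0 p.1) c := by
        rw [ff_jacT A x0 c hA p.1]
        exact sherman _ _ hp
      simp only [hP_def, Prod.mk.injEq, hinv]
      refine ⟨trivial, ?_⟩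
      rw [Matrix.sub_mulVec, Matrix.one_mulVec, Matrix.smul_mulVec, vecMulVec_mulVec',
        smul_smul]
    have hfe : fderiv ℝ (fun p : (Fin n → ℝ) × (Fin n → ℝ) =>
        ((f p.1, ((jacMat f p.1)ᵀ)⁻¹ *ᵥ p.2) : (Fin n → ℝ) × (Fin n → ℝ))) (x0, ξ0)
        = fderiv ℝ P (x0, ξ0) := heq.fderiv_eq
    -- derivative of P
    have hsub : HasFDerivAt (fun p : (Fin n → ℝ) × (Fin n → ℝ) => p.1 - x0)
        (ContinuousLinearMap.fst ℝ (Fin n → ℝ) (Fin n → ℝ)) (x0, ξ0) :=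
      hasFDerivAt_fst.sub_const x0
    have hu1 : HasFDerivAt (fun p : (Fin n → ℝ) × (Fin n → ℝ) => mACLM A (p.1 - x0))
        ((mACLM A).comp (ContinuousLinearMap.fst ℝ (Fin n → ℝ) (Fin n → ℝ))) (x0, ξ0) := by
      simpa using (mACLM A).hasFDerivAt.comp (x0, ξ0) hsub
    have ht1 : HasFDerivAt (fun p : (Fin n → ℝ) × (Fin n → ℝ) =>
        (1:ℝ) + dpCLM n c (mACLM A (p.1 - x0)))
        ((dpCLM n c).comp ((mACLM A).comp
          (ContinuousLinearMap.fst ℝ (Fin n → ℝ) (Fin n → ℝ)))) (x0, ξ0) := by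
      have := ((dpCLM n c).hasFDerivAt.comp (x0, ξ0) hu1).const_add (1:ℝ)
      simpa using this
    have hne : (1:ℝ) + dpCLM n c (mACLM A (((x0, ξ0) : (Fin n → ℝ) × (Fin n → ℝ)).1 - x0)) ≠ 0 := by
      simp
    have hq1 : HasFDerivAt (fun p : (Fin n → ℝ) × (Fin n → ℝ) =>
        ((1:ℝ) + dpCLM n c (mACLM A (p.1 - x0)))⁻¹)
        ((ContinuousLinearMap.smulRight (1 : ℝ →L[ℝ] ℝ)
            (-(((1:ℝ) + dpCLM n c (mACLM A (x0 - x0))) ^ 2)⁻¹)).comp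
          ((dpCLM n c).comp ((mACLM A).comp
            (ContinuousLinearMap.fst ℝ (Fin n → ℝ) (Fin n → ℝ))))) (x0, ξ0) :=
      (hasFDerivAt_inv hne).comp (x0, ξ0) ht1
    have hq2 : HasFDerivAt (fun p : (Fin n → ℝ) × (Fin n → ℝ) => dpCLM n c p.2)
        ((dpCLM n c).comp (ContinuousLinearMap.snd ℝ (Fin n → ℝ) (Fin n → ℝ))) (x0, ξ0) := by
      have := (dpCLM n c).hasFDerivAt.comp (x0, ξ0) hasFDerivAt_snd; exact this
    have hr := hq1.mul hq2
    have huf : HasFDerivAt (fun p : (Fin n → ℝ) × (Fin n → ℝ) => uu A x0 p.1)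
        ((mACLM A).comp (ContinuousLinearMap.fst ℝ (Fin n → ℝ) (Fin n → ℝ))) (x0, ξ0) := hu1
    have hsmul := hr.smul huf
    have hP2 := hasFDerivAt_snd.sub hsmul
    have hP1 : HasFDerivAt (fun p : (Fin n → ℝ) × (Fin n → ℝ) => f p.1)
        ((ContinuousLinearMap.id ℝ (Fin n → ℝ) + (dpCLM n (uu A x0 x0)).smulRight c).comp
          (ContinuousLinearMap.fst ℝ (Fin n → ℝ) (Fin n → ℝ))) (x0, ξ0) :=
      by have := (ff_hasFDerivAt A x0 c hA x0).comp (x0, ξ0) (hasFDerivAt_fst (𝕜 := ℝ) (p := ((x0, ξ0) : (Fin n → ℝ) × (Fin n → ℝ)))); exact this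
    have hP : HasFDerivAt P _ (x0, ξ0) := hP1.prodMk hP2
    rw [hfe, hP.fderiv]
    refine Prod.ext ?_ ?_
    · simp [hdp0]
    · simp [hcξ, hdp0]
end
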